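/- Let ℙ be a Bernoulli measure on ∂M and let V : ∂M → M̄ be an exhaustive asynchronous stopping time. Then the shift operator θ_V : ∂M → ∂M, which is defined ℙ-almost surely on ∂M, preserves the measure ℙ and is ergodic. -/

import Mathlib

open MeasureTheory Filter
open scoped ENNReal NNReal

namespace HeapPaper

variable {S : Type}

/-- Commutation pairs of words, generating the trace congruence. -/
def CommRel (I : S → S → Prop) (w₁ w₂ : FreeMonoid S) : Prop :=
  ∃ a b : S, I a b ∧ w₁ = FreeMonoid.of a * FreeMonoid.of b ∧
    w₂ = FreeMonoid.of b * FreeMonoid.of a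

/-- The congruence on the free monoid generated by the commutation of independent pieces. -/
def HeapCon (I : S → S → Prop) : Con (FreeMonoid S) := conGen (CommRel I)

/-- The heap monoid `M(Σ, I)`:  the presented monoid `⟨Σ | ab = ba, (a,b) ∈ I⟩`. -/
def Heap (I : S → S → Prop) := (HeapCon I).Quotient

instance (I : S → S → Prop) : Monoid (Heap I) :=
  inferInstanceAs (Monoid (HeapCon I).Quotient)

/-- The unique additive extension to heaps of a function `φ` defined on pieces. -/
def addExt {A : Type} [AddCommMonoid A] {I : S → S → Prop} (φ : S → A) : Heap I → A :=
  fun x => Multiplicative.toAdd <|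
    (Con.lift (HeapCon I) (FreeMonoid.lift fun a => Multiplicative.ofAdd (φ a))
      (Con.conGen_le.mpr (by
        rintro w₁ w₂ ⟨a, b, hab, rfl, rfl⟩
        exact (Con.ker_rel _).mpr (by simp [map_mul, mul_comm])))) x

/-- The length `|x|` of a heap: the common length of its representative words. -/
def len {I : S → S → Prop} (x : Heap I) : ℕ := addExt (fun _ => 1) x

/-- The number `|x|ₐ` of occurrences of the piece `a` in the heap `x`. -/
def occ {I : S → S → Prop} [DecidableEq S] (a : S) (x : Heap I) : ℕ :=
  addExt (fun b => if b = a then 1 else 0) x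

/-- The additive extension `⟨φ, x⟩` of a real-valued cost function. -/
def pairing {I : S → S → Prop} (φ : S → ℝ) (x : Heap I) : ℝ := addExt φ x

/-- The left-divisibility order on the heap monoid. -/
def hLe {I : S → S → Prop} (x y : Heap I) : Prop := ∃ z : Heap I, y = x * z

/-- Cliques: finite sets of pairwise independent pieces. -/
def Cl (I : S → S → Prop) := {s : Finset S // ∀ a ∈ s, ∀ b ∈ s, a ≠ b → I a b}

/-- The empty clique. -/
def emptyCl (I : S → S → Prop) : Cl I := ⟨∅, by simp⟩

/-- The heap associated with a clique (product of its pieces, in any order). -/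
def Cl.heap {I : S → S → Prop} (γ : Cl I) : Heap I :=
  γ.1.noncommProd (fun a => (HeapCon I).mk' (FreeMonoid.of a)) (by
    intro a ha b hb hab
    have hI : I a b := γ.2 a ha b hb hab
    show (HeapCon I).mk' (FreeMonoid.of a) * (HeapCon I).mk' (FreeMonoid.of b)
        = (HeapCon I).mk' (FreeMonoid.of b) * (HeapCon I).mk' (FreeMonoid.of a)
    rw [← map_mul, ← map_mul]
    exact (Con.eq _).mpr (ConGen.Rel.of _ _ ⟨a, b, hI, rfl, rfl⟩))

/-- The Cartier–Foata move relation `γ → γ'` between cliques. -/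
def Move {I : S → S → Prop} (γ γ' : Cl I) : Prop :=
  ∀ b ∈ γ'.1, ∃ a ∈ γ.1, ¬ I a b

/-- The boundary `∂M`: infinite admissible sequences of nonempty cliques. -/
def Bnd (I : S → S → Prop) :=
  {ξ : ℕ → Cl I // (∀ n, (ξ n).1.Nonempty) ∧ ∀ n, Move (ξ n) (ξ (n + 1))}

/-- `M̄ = M ∪ ∂M`. -/
def MB (I : S → S → Prop) := Heap I ⊕ Bnd I

/-- Partial products of a sequence of cliques. -/
def ppSeq {I : S → S → Prop} (c : ℕ → Cl I) (n : ℕ) : Heap I :=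
  ((List.range n).map fun i => (c i).heap).prod

/-- `c` is the Cartier–Foata decomposition of the heap `x`, padded with empty cliques:
`c` is admissible, eventually empty, with partial products eventually equal to `x`. -/
def CFprop (I : S → S → Prop) (c : ℕ → Cl I) (x : Heap I) : Prop :=
  (∀ n, Move (c n) (c (n + 1))) ∧
    ∃ N, ∀ n, N ≤ n → ppSeq c n = x ∧ c n = emptyCl I

/-- The (padded) Cartier–Foata decomposition of a heap. -/
noncomputable def cf (I : S → S → Prop) (x : Heap I) : ℕ → Cl I :=
  letI := Classical.propDecidable (∃ c, CFprop I c x)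
  if h : ∃ c, CFprop I c x then h.choose else fun _ => emptyCl I

/-- The Cartier–Foata sequence of an element of `M̄`. -/
noncomputable def seqOf {I : S → S → Prop} : MB I → ℕ → Cl I
  | .inl x => cf I x
  | .inr ξ => ξ.1

/-- Partial products of the Cartier–Foata sequence of an element of `M̄`. -/
noncomputable def pp {I : S → S → Prop} (ζ : MB I) (n : ℕ) : Heap I :=
  ppSeq (seqOf ζ) n

/-- The order on `M̄`: `ξ ≤ ξ'` iff `γ₁⋯γₙ ≤ γ'₁⋯γ'ₙ` in `M` for all `n`. -/
noncomputable def mLe {I : S → S → Prop} (ζ ζ' : MB I) : Prop :=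
  ∀ n : ℕ, hLe (pp ζ n) (pp ζ' n)

/-- The elementary cylinder `↑x ⊆ ∂M` of base `x ∈ M`. -/
noncomputable def cyl {I : S → S → Prop} (x : Heap I) : Set (Bnd I) :=
  {ξ : Bnd I | mLe (.inl x) (.inr ξ)}

/-- The σ-algebra `𝔉` on `∂M` generated by the elementary cylinders. -/
noncomputable def Fsa (I : S → S → Prop) : MeasurableSpace (Bnd I) :=
  MeasurableSpace.generateFrom {A : Set (Bnd I) | ∃ x : Heap I, A = cyl x}

noncomputable instance (I : S → S → Prop) : MeasurableSpace (Bnd I) := Fsa I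

/-- `ζ` is the least upper bound in `M̄` of the nondecreasing sequence `(x·γ₁⋯γₙ)ₙ`,
where `(γₙ)` is the Cartier–Foata sequence of `ξ`; this characterizes `x·ξ`. -/
noncomputable def IsConc {I : S → S → Prop} (x : Heap I) (ξ : Bnd I) (ζ : MB I) : Prop :=
  (∀ n : ℕ, mLe (.inl (x * pp (.inr ξ) n)) ζ) ∧
    ∀ η : MB I, (∀ n : ℕ, mLe (.inl (x * pp (.inr ξ) n)) η) → mLe ζ η

/-- The concatenation `x·ξ ∈ ∂M` of a heap `x` and an infinite heap `ξ`. -/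
noncomputable def concB {I : S → S → Prop} (x : Heap I) (ξ : Bnd I) : Bnd I :=
  letI := Classical.propDecidable (∃ ζ : Bnd I, IsConc x ξ (.inr ζ))
  if h : ∃ ζ : Bnd I, IsConc x ξ (.inr ζ) then h.choose else ξ

/-- The difference `ξ − x`: the unique `ζ ∈ ∂M` with `x·ζ = ξ` (junk value if none exists). -/
noncomputable def subB {I : S → S → Prop} (ξ : Bnd I) (x : Heap I) : Bnd I :=
  letI := Classical.propDecidable (∃ ζ : Bnd I, concB x ζ = ξ)
  if h : ∃ ζ : Bnd I, concB x ζ = ξ then h.choose else ξ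

/-- Asynchronous stopping time. -/
noncomputable def IsAST {I : S → S → Prop} (V : Bnd I → MB I) : Prop :=
  (∀ ξ : Bnd I, mLe (V ξ) (.inr ξ)) ∧
    ∀ (ξ ξ' : Bnd I) (x : Heap I), V ξ = .inl x → mLe (.inl x) (.inr ξ') → V ξ' = V ξ

/-- The shift operator `θ_V` associated with an AST `V` (junk: identity outside its domain). -/
noncomputable def shiftV {I : S → S → Prop} (V : Bnd I → MB I) (ξ : Bnd I) : Bnd I :=
  match V ξ with
  | .inl x => subB ξ x
  | .inr _ => ξ

/-- The σ-algebra `𝔉_V` generated by the cylinders of the finite values of `V`. -/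
noncomputable def astSA {I : S → S → Prop} (V : Bnd I → MB I) : MeasurableSpace (Bnd I) :=
  MeasurableSpace.generateFrom
    {A : Set (Bnd I) | ∃ x : Heap I, (∃ ξ : Bnd I, V ξ = .inl x) ∧ A = cyl x}

/-- The iterated sequence `(Vₙ)ₙ` of an AST `V`:  `V₀ = 0` and
`V_{n+1}(ξ) = Vₙ(ξ)·V(ξ − Vₙ(ξ))` if `Vₙ(ξ) ∈ M`, `V_{n+1}(ξ) = ξ` otherwise. -/
noncomputable def iter {I : S → S → Prop} (V : Bnd I → MB I) : ℕ → Bnd I → MB I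
  | 0, _ => .inl 1
  | n + 1, ξ =>
    match iter V n ξ with
    | .inl x =>
      match V (subB ξ x) with
      | .inl y => .inl (x * y)
      | .inr ζ => .inr (concB x ζ)
    | .inr _ => .inr ξ

/-- The increment `Δ_{n+1} = V ∘ θ_{Vₙ}` (junk value outside the domain of `θ_{Vₙ}`). -/
noncomputable def Delta {I : S → S → Prop} (V : Bnd I → MB I) (n : ℕ) (ξ : Bnd I) : MB I :=
  match iter V n ξ with
  | .inl x => V (subB ξ x)
  | .inr _ => .inr ξ

/-- The length of an element of `M̄`, with `|ξ| = ∞` for `ξ ∈ ∂M`. -/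
noncomputable def lenE {I : S → S → Prop} : MB I → ℝ≥0∞
  | .inl x => (len x : ℝ≥0∞)
  | .inr _ => ⊤

/-- `E|V| < ∞`. -/
noncomputable def EVfin {I : S → S → Prop} (P : Measure (Bnd I)) (V : Bnd I → MB I) : Prop :=
  ∫⁻ ξ, lenE (V ξ) ∂P < ⊤

/-- The AST `V` is exhaustive: it is `ℙ`-a.s. finite and `ℙ`-a.s. `ξ = ⋁ₙ Vₙ(ξ)`
(`ξ` is the least upper bound of its iterates). -/
noncomputable def Exhaustive {I : S → S → Prop} (P : Measure (Bnd I)) (V : Bnd I → MB I) : Prop :=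
  (∀ᵐ ξ ∂P, ∃ x : Heap I, V ξ = .inl x) ∧
    ∀ᵐ ξ ∂P, (∀ n : ℕ, mLe (iter V n ξ) (.inr ξ)) ∧
      ∀ ζ : MB I, (∀ n : ℕ, mLe (iter V n ξ) ζ) → mLe (.inr ξ) ζ

/-- `ℙ` is a Bernoulli measure: a probability measure on `(∂M, 𝔉)` that is multiplicative
and positive on elementary cylinders. -/
noncomputable def IsBernoulli {I : S → S → Prop} (P : Measure (Bnd I)) : Prop :=
  IsProbabilityMeasure P ∧
    (∀ x y : Heap I, P (cyl (x * y)) = P (cyl x) * P (cyl y)) ∧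
    ∀ x : Heap I, 0 < P (cyl x)

/-- `ζ` is the greatest lower bound, within the complete lattice `L(ξ)`, of the set
`Hₐ(ξ)` of finite subheaps of `ξ` containing an occurrence of `a`:  this characterizes
the first hitting time of `a`. -/
noncomputable def IsHit {I : S → S → Prop} [DecidableEq S] (a : S) (ξ : Bnd I) (ζ : MB I) :
    Prop :=
  mLe ζ (.inr ξ) ∧
    (∀ x : Heap I, mLe (.inl x) (.inr ξ) → 0 < occ a x → mLe ζ (.inl x)) ∧
    ∀ η : MB I, mLe η (.inr ξ) →
      (∀ x : Heap I, mLe (.inl x) (.inr ξ) → 0 < occ a x → mLe η (.inl x)) → mLe η ζ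

/-- The first hitting time of the piece `a`. -/
noncomputable def hit {I : S → S → Prop} [DecidableEq S] (a : S) (ξ : Bnd I) : MB I :=
  letI := Classical.propDecidable (∃ ζ : MB I, IsHit a ξ ζ)
  if h : ∃ ζ : MB I, IsHit a ξ ζ then h.choose else .inr ξ

/-- A maximal clique: a maximal element of `(𝒞, ≤)`. -/
noncomputable def IsMaxCl {I : S → S → Prop} (γ : Cl I) : Prop :=
  ∀ δ : Cl I, hLe γ.heap δ.heap → δ.heap = γ.heap

/-- The AST cutting an infinite heap at the first occurrence of a maximal clique. -/
noncomputable def Vmax {I : S → S → Prop} (ξ : Bnd I) : MB I :=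
  letI := Classical.propDecidable
  if h : ∃ k : ℕ, IsMaxCl (ξ.1 k) then .inl (ppSeq ξ.1 (Nat.find h + 1)) else .inr ξ

/-- The ergodic mean `⟨φ, x⟩ / |x|` (junk value `0` on infinite heaps). -/
noncomputable def ratioC {I : S → S → Prop} (φ : S → ℝ) : MB I → ℝ
  | .inl x => pairing φ x / (len x : ℝ)
  | .inr _ => 0

/-- The ratio `φ(x)/|x|` for `φ` defined on heaps (junk value `0` on infinite heaps). -/
noncomputable def ratioH {I : S → S → Prop} (φ : Heap I → ℝ) : MB I → ℝ
  | .inl x => φ x / (len x : ℝ)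
  | .inr _ => 0

/-- The set `ℭ` of nonempty cliques. -/
def NCl (I : S → S → Prop) := {γ : Cl I // γ.1.Nonempty}

instance [Fintype S] (I : S → S → Prop) : Finite (Cl I) :=
  inferInstanceAs (Finite {s : Finset S // ∀ a ∈ s, ∀ b ∈ s, a ≠ b → I a b})

instance [Fintype S] (I : S → S → Prop) : Finite (NCl I) :=
  inferInstanceAs (Finite {γ : Cl I // γ.1.Nonempty})

/-- The valuation `f(x) = ℙ(↑x)` associated with `ℙ`. -/
noncomputable def fval {I : S → S → Prop} (P : Measure (Bnd I)) (x : Heap I) : ℝ :=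
  (P (cyl x)).toReal

open Classical in
/-- The Möbius transform `h` of the valuation `f` associated with `ℙ`. -/
noncomputable def mobius {I : S → S → Prop} (P : Measure (Bnd I)) (γ : Cl I) : ℝ :=
  ∑ᶠ γ' : Cl I,
    if hLe γ.heap γ'.heap then (-1 : ℝ) ^ (γ'.1.card - γ.1.card) * fval P γ'.heap else 0

open Classical in
/-- The normalization `g(γ) = Σ_{γ'∈ℭ, γ→γ'} h(γ')`. -/
noncomputable def gnorm {I : S → S → Prop} (P : Measure (Bnd I)) (γ : Cl I) : ℝ :=
  ∑ᶠ γ' : Cl I, if γ'.1.Nonempty ∧ Move γ γ' then mobius P γ' else 0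

open Classical in
/-- The transition matrix of the Markov chain of cliques. -/
noncomputable def Pmat {I : S → S → Prop} (P : Measure (Bnd I)) (γ γ' : Cl I) : ℝ :=
  if Move γ γ' then mobius P γ' / gnorm P γ else 0

/-- `π` is a stationary probability distribution, carried by the nonempty cliques, of the
Markov chain of cliques. -/
noncomputable def IsStationary {I : S → S → Prop} (P : Measure (Bnd I)) (π : Cl I → ℝ) :
    Prop :=
  (∀ γ : Cl I, 0 ≤ π γ) ∧ (π (emptyCl I) = 0) ∧ (∑ᶠ γ : Cl I, π γ = 1) ∧
    ∀ γ' : Cl I, π γ' = ∑ᶠ γ : Cl I, π γ * Pmat P γ γ'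

open Classical in
/-- The nonnegative matrix `B` on `ℭ×ℭ`: `B_{γ,γ'} = f(γ')` if `γ → γ'`, else `0`. -/
noncomputable def Bmat {I : S → S → Prop} (P : Measure (Bnd I)) :
    Matrix (NCl I) (NCl I) ℝ :=
  fun γ γ' => if Move γ.1 γ'.1 then fval P γ'.1.heap else 0

/-- The spectral radius of `B` (as a complex matrix). -/
noncomputable def specRadB [Fintype S] {I : S → S → Prop} (P : Measure (Bnd I)) : ℝ≥0∞ :=
  letI : Fintype (NCl I) := Fintype.ofFinite _
  letI : DecidableEq (NCl I) := Classical.decEq _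
  spectralRadius ℂ ((Bmat P).map (algebraMap ℝ ℂ))

/-- The height `τ(x)` of a heap: the number of cliques in its Cartier–Foata decomposition. -/
noncomputable def height {I : S → S → Prop} (x : Heap I) : ℕ :=
  sInf {N : ℕ | ∀ n, N ≤ n → cf I x n = emptyCl I}

/-- The ratio `|x|/τ(x)` (junk value `0` on infinite heaps). -/
noncomputable def speedRatio {I : S → S → Prop} : MB I → ℝ
  | .inl x => (len x : ℝ) / (height x : ℝ)
  | .inr _ => 0

/-- `ψ ∘ θ_V` extended by `0` outside the domain of `θ_V`. -/
noncomputable def extShift {I : S → S → Prop} (V : Bnd I → MB I) (ψ : Bnd I → ℝ)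
    (η : Bnd I) : ℝ :=
  match V η with
  | .inl _ => ψ (shiftV V η)
  | .inr _ => 0


/-! ### Development: basic lemmas on heaps -/

section Basics

variable {I : S → S → Prop}

/-- The single-letter heap. -/
noncomputable def hof (I : S → S → Prop) (a : S) : Heap I := (HeapCon I).mk' (FreeMonoid.of a)

/-- The heap of a word. -/
noncomputable def mkh (I : S → S → Prop) (l : List S) : Heap I :=
  (HeapCon I).mk' (FreeMonoid.ofList l)

lemma mkh_nil : mkh I [] = 1 := map_one _

lemma mkh_cons (a : S) (l : List S) : mkh I (a :: l) = hof I a * mkh I l := by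
  unfold mkh hof
  rw [show FreeMonoid.ofList (a :: l) = FreeMonoid.of a * FreeMonoid.ofList l from rfl, map_mul]; rfl

lemma heap_exists_list (x : Heap I) : ∃ l : List S, x = mkh I l := by
  induction x using Con.induction_on with
  | _ w => exact ⟨w.toList, by unfold mkh; rw [FreeMonoid.ofList_toList]; rfl⟩

/-- The monoid hom underlying `addExt`. -/
noncomputable def addExtHom {A : Type} [AddCommMonoid A] (I : S → S → Prop) (φ : S → A) :
    Heap I →* Multiplicative A :=
  Con.lift (HeapCon I) (FreeMonoid.lift fun a => Multiplicative.ofAdd (φ a))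
    (Con.conGen_le.mpr (by
      rintro w₁ w₂ ⟨a, b, hab, rfl, rfl⟩
      exact (Con.ker_rel _).mpr (by simp [map_mul, mul_comm])))

lemma addExt_eq {A : Type} [AddCommMonoid A] (φ : S → A) (x : Heap I) :
    addExt φ x = Multiplicative.toAdd (addExtHom I φ x) := rfl

lemma addExt_mul {A : Type} [AddCommMonoid A] (φ : S → A) (x y : Heap I) :
    addExt φ (x * y) = addExt φ x + addExt φ y := by
  rw [addExt_eq, addExt_eq, addExt_eq, map_mul, toAdd_mul]

lemma addExt_one {A : Type} [AddCommMonoid A] (φ : S → A) :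
    addExt φ (1 : Heap I) = 0 := by
  rw [addExt_eq, map_one]; rfl

lemma addExt_hof {A : Type} [AddCommMonoid A] (φ : S → A) (a : S) :
    addExt φ (hof I a) = φ a := by
  have h1 : (addExtHom I φ) (hof I a)
      = FreeMonoid.lift (fun a => Multiplicative.ofAdd (φ a)) (FreeMonoid.of a) :=
    Con.lift_mk' _ _
  rw [addExt_eq, h1, FreeMonoid.lift_eval_of]
  rfl

lemma len_mul (x y : Heap I) : len (x * y) = len x + len y := addExt_mul _ x y
lemma len_one : len (1 : Heap I) = 0 := addExt_one _
lemma len_hof (a : S) : len (hof I a) = 1 := addExt_hof _ a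

lemma len_mkh (l : List S) : len (mkh I l) = l.length := by
  induction l with
  | nil => rw [mkh_nil]; exact len_one
  | cons a l ih => rw [mkh_cons, len_mul, len_hof, ih, List.length_cons]; omega

lemma eq_one_of_len_eq_zero {x : Heap I} (h : len x = 0) : x = 1 := by
  obtain ⟨l, rfl⟩ := heap_exists_list x
  rw [len_mkh] at h
  rw [List.length_eq_zero_iff.mp h, mkh_nil]

lemma occ_mul [DecidableEq S] (a : S) (x y : Heap I) : occ a (x * y) = occ a x + occ a y :=
  addExt_mul _ x y
lemma occ_hof [DecidableEq S] (a b : S) : occ a (hof I b) = if b = a then 1 else 0 :=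
  addExt_hof _ b

/-! ### The divisibility preorder -/

lemma hLe_refl (x : Heap I) : hLe x x := ⟨1, (mul_one x).symm⟩

lemma hLe_trans {x y z : Heap I} (h1 : hLe x y) (h2 : hLe y z) : hLe x z := by
  obtain ⟨u, rfl⟩ := h1; obtain ⟨v, rfl⟩ := h2
  exact ⟨u * v, mul_assoc x u v⟩

lemma hLe_mul_right (x z : Heap I) : hLe x (x * z) := ⟨z, rfl⟩

lemma hLe_one (x : Heap I) : hLe 1 x := ⟨x, (one_mul x).symm⟩

lemma hLe_mul_left {x y : Heap I} (z : Heap I) (h : hLe x y) : hLe (z * x) (z * y) := by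
  obtain ⟨u, rfl⟩ := h; exact ⟨u, (mul_assoc z x u).symm⟩

lemma len_le_of_hLe {x y : Heap I} (h : hLe x y) : len x ≤ len y := by
  obtain ⟨u, rfl⟩ := h; rw [len_mul]; omega

lemma hLe_antisymm {x y : Heap I} (h1 : hLe x y) (h2 : hLe y x) : x = y := by
  obtain ⟨u, rfl⟩ := h1
  have h3 := len_le_of_hLe h2
  rw [len_mul] at h3
  have : len u = 0 := by omega
  rw [eq_one_of_len_eq_zero this, mul_one]

lemma eq_of_hLe_of_len_le {x y : Heap I} (h : hLe x y) (hl : len y ≤ len x) : x = y := by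
  obtain ⟨u, rfl⟩ := h
  rw [len_mul] at hl
  have : len u = 0 := by omega
  rw [eq_one_of_len_eq_zero this, mul_one]

/-! ### Commutation -/

lemma hof_swap {a b : S} (hab : I a b) : hof I a * hof I b = hof I b * hof I a := by
  show (HeapCon I).mk' (FreeMonoid.of a) * (HeapCon I).mk' (FreeMonoid.of b)
      = (HeapCon I).mk' (FreeMonoid.of b) * (HeapCon I).mk' (FreeMonoid.of a)
  rw [← map_mul, ← map_mul]
  exact (Con.eq _).mpr (ConGen.Rel.of _ _ ⟨a, b, hab, rfl, rfl⟩)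

lemma commute_hof {a b : S} (hab : I a b) : Commute (hof I a) (hof I b) := hof_swap hab

end Basics


/-! ### Cliques -/

section Cliques

variable {I : S → S → Prop}

lemma Cl.ext {γ δ : Cl I} (h : γ.1 = δ.1) : γ = δ := Subtype.ext h

lemma heap_emptyCl : (emptyCl I).heap = 1 := by
  unfold Cl.heap emptyCl
  exact Finset.noncommProd_empty _ _

lemma move_emptyCl (γ : Cl I) : Move γ (emptyCl I) := by
  intro b hb
  simp [emptyCl] at hb

lemma eq_empty_of_move_empty {γ : Cl I} (h : Move (emptyCl I) γ) : γ = emptyCl I := by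
  apply Cl.ext
  ext b
  simp only [emptyCl, Finset.notMem_empty, iff_false]
  intro hb
  obtain ⟨a, ha, _⟩ := h b hb
  simp [emptyCl] at ha

lemma heap_erase_mul [DecidableEq S] {γ : Cl I} {a : S} (ha : a ∈ γ.1) :
    ∃ δ : Cl I, δ.1 = γ.1.erase a ∧ δ.heap * hof I a = γ.heap := by
  refine ⟨⟨γ.1.erase a, fun x hx y hy hxy => γ.2 x (Finset.mem_of_mem_erase hx)
    y (Finset.mem_of_mem_erase hy) hxy⟩, rfl, ?_⟩
  exact Finset.noncommProd_erase_mul γ.1 ha _ _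

lemma len_cliqueHeap (γ : Cl I) : len γ.heap = γ.1.card := by
  have h1 : addExtHom I (fun _ => (1 : ℕ)) γ.heap
      = γ.1.noncommProd (fun a => addExtHom I (fun _ => (1 : ℕ)) (hof I a)) (by
          intro x _ y _ _
          exact Commute.all _ _) := by
    exact Finset.map_noncommProd _ _ _ _
  have hval : ∀ x : S, (addExtHom I (fun _ => (1:ℕ))) (hof I x) = Multiplicative.ofAdd 1 := by
    intro x
    have := addExt_hof (I := I) (fun _ => (1 : ℕ)) x
    rw [addExt_eq] at this
    exact Multiplicative.toAdd.injective (by simpa using this)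
  show Multiplicative.toAdd (addExtHom I (fun _ => (1:ℕ)) γ.heap) = _
  rw [h1, Finset.noncommProd_congr rfl (fun x _ => hval x) (fun x _ y _ _ => Commute.all _ _),
    Finset.noncommProd_eq_prod, Finset.prod_const, toAdd_pow]
  simp

lemma occ_cliqueHeap [DecidableEq S] (a : S) (γ : Cl I) :
    occ a γ.heap = if a ∈ γ.1 then 1 else 0 := by
  classical
  set φ : S → ℕ := fun b => if b = a then 1 else 0 with hφ
  have h1 : addExtHom I φ γ.heap
      = γ.1.noncommProd (fun b => addExtHom I φ (hof I b)) (by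
          intro x _ y _ _
          exact Commute.all _ _) :=
    Finset.map_noncommProd _ _ _ _
  have hval : ∀ x : S, (addExtHom I φ) (hof I x) = Multiplicative.ofAdd (φ x) := by
    intro x
    have := addExt_hof (I := I) φ x
    rw [addExt_eq] at this
    exact Multiplicative.toAdd.injective (by simpa using this)
  show Multiplicative.toAdd (addExtHom I φ γ.heap) = _
  rw [h1, Finset.noncommProd_congr rfl (fun x _ => hval x) (fun x _ y _ _ => Commute.all _ _),
    Finset.noncommProd_eq_prod, ← ofAdd_sum]
  have : (∑ b ∈ γ.1, φ b) = if a ∈ γ.1 then 1 else 0 := by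
    rw [hφ]
    simpa using Finset.sum_ite_eq' γ.1 a (fun _ => 1)
  rw [this]
  rfl

lemma commute_hof_heap {γ : Cl I} {a : S} (h : ∀ b ∈ γ.1, I a b) :
    Commute (hof I a) γ.heap := by
  apply Finset.noncommProd_commute
  intro b hb
  exact commute_hof (h b hb)

lemma heap_insert [DecidableEq S] (hsymm : ∀ a b : S, I a b → I b a) {γ : Cl I} {a : S} (ha : a ∉ γ.1)
    (hind : ∀ b ∈ γ.1, I a b) :
    ∃ δ : Cl I, δ.1 = insert a γ.1 ∧ δ.heap = γ.heap * hof I a := by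
  have hpair : ∀ x ∈ insert a γ.1, ∀ y ∈ insert a γ.1, x ≠ y → I x y := by
    intro x hx y hy hxy
    rcases Finset.mem_insert.mp hx with hx1 | hx1
    · rcases Finset.mem_insert.mp hy with hy1 | hy1
      · exact absurd (hx1.trans hy1.symm) hxy
      · subst hx1; exact hind y hy1
    · rcases Finset.mem_insert.mp hy with hy1 | hy1
      · subst hy1; exact hsymm _ _ (hind x hx1)
      · exact γ.2 x hx1 y hy1 hxy
  refine ⟨⟨insert a γ.1, hpair⟩, rfl, ?_⟩
  have h1 : Cl.heap (⟨insert a γ.1, hpair⟩ : Cl I) = hof I a * γ.heap := by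
    exact Finset.noncommProd_insert_of_notMem _ _ _ _ ha
  rw [h1]
  exact commute_hof_heap hind

end Cliques


/-! ### Cartier–Foata machinery -/

section CF

variable {I : S → S → Prop}

lemma ppSeq_zero (c : ℕ → Cl I) : ppSeq c 0 = 1 := by unfold ppSeq; simp

lemma ppSeq_succ (c : ℕ → Cl I) (n : ℕ) : ppSeq c (n + 1) = ppSeq c n * (c n).heap := by
  unfold ppSeq; rw [List.range_succ]; simp

lemma ppSeq_congr {c c' : ℕ → Cl I} {n : ℕ} (h : ∀ k, k < n → c k = c' k) :
    ppSeq c n = ppSeq c' n := by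
  induction n with
  | zero => rw [ppSeq_zero, ppSeq_zero]
  | succ n ih =>
    rw [ppSeq_succ, ppSeq_succ, ih (fun k hk => h k (by omega)), h n (by omega)]

lemma hLe_ppSeq (c : ℕ → Cl I) {n m : ℕ} (h : n ≤ m) : hLe (ppSeq c n) (ppSeq c m) := by
  induction m with
  | zero =>
    have hn : n = 0 := by omega
    subst hn; exact hLe_refl _
  | succ m ih =>
    rcases Nat.lt_or_ge n (m+1) with h1 | h1
    · refine hLe_trans (ih (by omega)) ?_
      rw [ppSeq_succ]; exact hLe_mul_right _ _
    · have hn : n = m + 1 := by omega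
      subst hn; exact hLe_refl _

lemma ppSeq_const_empty (m : ℕ) : ppSeq (fun _ => emptyCl I) m = 1 := by
  induction m with
  | zero => exact ppSeq_zero _
  | succ m ih => rw [ppSeq_succ, heap_emptyCl, mul_one, ih]

lemma len_ppSeq_ge (ξ : Bnd I) (n : ℕ) : n ≤ len (ppSeq ξ.1 n) := by
  induction n with
  | zero => omega
  | succ n ih =>
    rw [ppSeq_succ, len_mul, len_cliqueHeap]
    have := Finset.card_pos.mpr (ξ.2.1 n)
    omega

/-- The truncated sequence. -/
noncomputable def truncSeq (c : ℕ → Cl I) (n : ℕ) : ℕ → Cl I :=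
  fun k => if k < n then c k else emptyCl I

lemma ppSeq_trunc (c : ℕ → Cl I) (n m : ℕ) :
    ppSeq (truncSeq c n) m = ppSeq c (min m n) := by
  induction m with
  | zero => rw [ppSeq_zero, Nat.zero_min, ppSeq_zero]
  | succ m ih =>
    rw [ppSeq_succ, ih]
    by_cases h : m < n
    · rw [show min (m+1) n = (min m n) + 1 by omega, ppSeq_succ,
        show min m n = m by omega]
      unfold truncSeq
      rw [if_pos h]
    · unfold truncSeq
      rw [if_neg h, heap_emptyCl, mul_one, show min (m+1) n = min m n by omega]

lemma cfprop_trunc {c : ℕ → Cl I} (hadm : ∀ k, Move (c k) (c (k+1))) (n : ℕ) :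
    CFprop I (truncSeq c n) (ppSeq c n) := by
  constructor
  · intro k
    unfold truncSeq
    by_cases h1 : k + 1 < n
    · rw [if_pos (by omega), if_pos h1]; exact hadm k
    · rw [if_neg h1]; exact move_emptyCl _
  · refine ⟨n, fun m hm => ⟨?_, ?_⟩⟩
    · rw [ppSeq_trunc, show min m n = n by omega]
    · unfold truncSeq; rw [if_neg (by omega)]

variable (hCF : ∀ x : Heap I, ∃! c : ℕ → Cl I, CFprop I c x)

include hCF

lemma cfprop_cf (x : Heap I) : CFprop I (cf I x) x := by
  have h : ∃ c, CFprop I c x := (hCF x).exists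
  unfold cf
  rw [dif_pos h]
  exact h.choose_spec

lemma cf_eq_of_cfprop {c : ℕ → Cl I} {x : Heap I} (h : CFprop I c x) : cf I x = c :=
  (hCF x).unique (cfprop_cf hCF x) h

lemma cf_move (x : Heap I) (n : ℕ) : Move (cf I x n) (cf I x (n+1)) := (cfprop_cf hCF x).1 n

lemma height_spec (x : Heap I) {n : ℕ} (h : height x ≤ n) : cf I x n = emptyCl I := by
  have hne : {N : ℕ | ∀ m, N ≤ m → cf I x m = emptyCl I}.Nonempty := by
    obtain ⟨N, hN⟩ := (cfprop_cf hCF x).2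
    exact ⟨N, fun m hm => (hN m hm).2⟩
  exact Nat.sInf_mem hne n h

lemma ppSeq_height (x : Heap I) {n : ℕ} (h : height x ≤ n) : ppSeq (cf I x) n = x := by
  obtain ⟨N, hN⟩ := (cfprop_cf hCF x).2
  have hconst : ∀ k, ppSeq (cf I x) (height x + k) = ppSeq (cf I x) (height x) := by
    intro k; induction k with
    | zero => rfl
    | succ k ih =>
      rw [show height x + (k+1) = (height x + k) + 1 by omega, ppSeq_succ,
        height_spec hCF x (by omega), heap_emptyCl, mul_one, ih]
  have h1 : ppSeq (cf I x) n = ppSeq (cf I x) (height x) := by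
    have := hconst (n - height x)
    rwa [show height x + (n - height x) = n by omega] at this
  have h2 : ppSeq (cf I x) (max N (height x)) = x := (hN _ (le_max_left _ _)).1
  have h3 : ppSeq (cf I x) (max N (height x)) = ppSeq (cf I x) (height x) := by
    have := hconst (max N (height x) - height x)
    rwa [show height x + (max N (height x) - height x) = max N (height x) by omega] at this
  rw [h1, ← h3, h2]

lemma hLe_ppSeq_cf (x : Heap I) (n : ℕ) : hLe (ppSeq (cf I x) n) x := by
  rcases le_or_gt (height x) n with h | h
  · rw [ppSeq_height hCF x h]; exact hLe_refl x
  · have h2 := hLe_ppSeq (cf I x) (le_of_lt h)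
    rwa [ppSeq_height hCF x (le_refl _)] at h2

lemma cf_ppSeq {c : ℕ → Cl I} (hadm : ∀ k, Move (c k) (c (k+1))) (n : ℕ) :
    cf I (ppSeq c n) = truncSeq c n :=
  cf_eq_of_cfprop hCF (cfprop_trunc hadm n)

lemma height_ppSeq_le {c : ℕ → Cl I} (hadm : ∀ k, Move (c k) (c (k+1))) (n : ℕ) :
    height (ppSeq c n) ≤ n := by
  apply Nat.sInf_le
  intro m hm
  rw [cf_ppSeq hCF hadm n]
  unfold truncSeq
  rw [if_neg (by omega)]

omit hCF in
lemma pp_inl (x : Heap I) (n : ℕ) : pp (Sum.inl x) n = ppSeq (cf I x) n := rfl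
omit hCF in
lemma pp_inr (ξ : Bnd I) (n : ℕ) : pp (Sum.inr ξ) n = ppSeq ξ.1 n := rfl

lemma pp_inl_ppSeq {c : ℕ → Cl I} (hadm : ∀ k, Move (c k) (c (k+1))) (n m : ℕ) :
    pp (Sum.inl (ppSeq c n)) m = ppSeq c (min m n) := by
  rw [pp_inl, cf_ppSeq hCF hadm n, ppSeq_trunc]

lemma cf_one : cf I (1 : Heap I) = fun _ => emptyCl I := by
  apply cf_eq_of_cfprop hCF
  exact ⟨fun k => move_emptyCl _, 0, fun m _ => ⟨ppSeq_const_empty m, rfl⟩⟩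

lemma pp_inl_one (n : ℕ) : pp (Sum.inl (1 : Heap I)) n = 1 := by
  rw [pp_inl, cf_one hCF, ppSeq_const_empty]

end CF


/-! ### The insertion lemma and monotonicity of Cartier–Foata prefixes -/

section Insertion

variable {I : S → S → Prop}
variable (hsymm : ∀ a b : S, I a b → I b a) (hirr : ∀ a : S, ¬ I a a)
variable (hCF : ∀ x : Heap I, ∃! c : ℕ → Cl I, CFprop I c x)

include hsymm hirr hCF

lemma insertion [DecidableEq S] (x : Heap I) (a : S) (n : ℕ) :
    hLe (ppSeq (cf I x) n) (ppSeq (cf I (x * hof I a)) n) := by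
  classical
  set Q : ℕ → Prop := fun k => ∀ j, k ≤ j → ∀ b ∈ (cf I x j).1, I a b with hQdef
  have hQex : ∃ k, Q k := by
    refine ⟨height x, ?_⟩
    intro j hj b hb
    rw [height_spec hCF x hj] at hb
    simp [emptyCl] at hb
  set hh := Nat.find hQex with hhdef
  have hfind : Q hh := Nat.find_spec hQex
  have hnotmem : a ∉ (cf I x hh).1 := fun hmem => hirr a (hfind hh le_rfl a hmem)
  have hind : ∀ b ∈ (cf I x hh).1, I a b := fun b hb => hfind hh le_rfl b hb
  obtain ⟨δ, hδ1, hδ2⟩ := heap_insert hsymm hnotmem hind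
  set c' : ℕ → Cl I := fun k => if k = hh then δ else cf I x k with hc'
  have hc'h : c' hh = δ := by rw [hc']; simp
  have hc'ne : ∀ k, k ≠ hh → c' k = cf I x k := by
    intro k hk; rw [hc']; simp [hk]
  have hprod : ∀ m, ppSeq c' m
      = if m ≤ hh then ppSeq (cf I x) m else ppSeq (cf I x) m * hof I a := by
    intro m; induction m with
    | zero => rw [if_pos (by omega), ppSeq_zero, ppSeq_zero]
    | succ m ih =>
      rw [ppSeq_succ, ppSeq_succ, ih]
      by_cases h1 : m + 1 ≤ hh
      · rw [if_pos h1, if_pos (by omega), hc'ne m (by omega)]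
      · rw [if_neg h1]
        by_cases h2 : m = hh
        · subst h2
          rw [if_pos le_rfl, hc'h, hδ2, mul_assoc]
        · rw [if_neg (by omega), hc'ne m h2]
          have hcomm : Commute (hof I a) (cf I x m).heap :=
            commute_hof_heap (fun b hb => hfind m (by omega) b hb)
          rw [mul_assoc, mul_assoc, hcomm.eq]
  have hmove : ∀ k, Move (c' k) (c' (k+1)) := by
    intro k
    by_cases hk : k + 1 = hh
    · rw [hc'ne k (by omega), hk, hc'h]
      intro b hb
      rw [hδ1] at hb
      rcases Finset.mem_insert.mp hb with hb1 | hb1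
      · subst hb1
        have hnQ : ¬ Q k := Nat.find_min hQex (by omega)
        have hex : ∃ j, k ≤ j ∧ ∃ b' ∈ (cf I x j).1, ¬ I b b' := by
          by_contra hcon
          push_neg at hcon
          exact hnQ (fun j hj b' hb' => hcon j hj b' hb')
        obtain ⟨j, hj, b', hb', hnb'⟩ := hex
        have hj2 : j = k := by
          by_contra hne
          exact hnb' (hfind j (by omega) b' hb')
        subst hj2
        exact ⟨b', hb', fun hI => hnb' (hsymm _ _ hI)⟩
      · have := cf_move hCF x k
        rw [hk] at this
        exact this b hb1
    · by_cases hk2 : k = hh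
      · subst hk2
        rw [hc'h, hc'ne (hh+1) hk]
        intro b hb
        obtain ⟨a', ha', hna'⟩ := cf_move hCF x hh b hb
        refine ⟨a', ?_, hna'⟩
        rw [hδ1]
        exact Finset.mem_insert_of_mem ha'
      · rw [hc'ne k hk2, hc'ne (k+1) hk]
        exact cf_move hCF x k
  have hcf' : CFprop I c' (x * hof I a) := by
    refine ⟨hmove, max (height x) (hh+1), fun m hm => ⟨?_, ?_⟩⟩
    · rw [hprod, if_neg (by omega), ppSeq_height hCF x (by omega)]
    · rw [hc'ne m (by omega)]
      exact height_spec hCF x (by omega)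
  rw [cf_eq_of_cfprop hCF hcf', hprod]
  by_cases h1 : n ≤ hh
  · rw [if_pos h1]; exact hLe_refl _
  · rw [if_neg h1]; exact hLe_mul_right _ _

/-- Monotonicity of Cartier–Foata prefixes: the key combinatorial lemma. -/
lemma pp_mono_aux [DecidableEq S] (l : List S) :
    ∀ (x : Heap I) (n : ℕ), hLe (ppSeq (cf I x) n) (ppSeq (cf I (x * mkh I l)) n) := by
  induction l with
  | nil => intro x n; rw [mkh_nil, mul_one]; exact hLe_refl _
  | cons b l ih =>
    intro x n
    rw [mkh_cons, ← mul_assoc]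
    exact hLe_trans (insertion hsymm hirr hCF x b n) (ih (x * hof I b) n)

/-- Monotonicity of Cartier–Foata prefixes: the key combinatorial lemma. -/
lemma pp_mono [DecidableEq S] {x y : Heap I} (h : hLe x y) (n : ℕ) :
    hLe (ppSeq (cf I x) n) (ppSeq (cf I y) n) := by
  obtain ⟨z, rfl⟩ := h
  obtain ⟨l, rfl⟩ := heap_exists_list z
  exact pp_mono_aux hsymm hirr hCF l x n

end Insertion


/-! ### The order on `M̄` -/

section MLe

variable {I : S → S → Prop} [DecidableEq S]
variable (hsymm : ∀ a b : S, I a b → I b a) (hirr : ∀ a : S, ¬ I a a)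
variable (hCF : ∀ x : Heap I, ∃! c : ℕ → Cl I, CFprop I c x)

lemma mLe_refl (ζ : MB I) : mLe ζ ζ := fun _ => hLe_refl _

lemma mLe_trans {a b c : MB I} (h1 : mLe a b) (h2 : mLe b c) : mLe a c :=
  fun n => hLe_trans (h1 n) (h2 n)

lemma bnd_ext {ξ ξ' : Bnd I} (h : ∀ n, ppSeq ξ.1 n = ppSeq ξ'.1 n) : ξ = ξ' := by
  apply Subtype.ext; funext n; apply Cl.ext; ext a
  have h1 := h (n+1)
  have h0 := h n
  rw [ppSeq_succ, ppSeq_succ] at h1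
  have h2 := congrArg (occ a) h1
  rw [occ_mul, occ_mul, h0, occ_cliqueHeap, occ_cliqueHeap] at h2
  by_cases hmem : a ∈ (ξ.1 n).1 <;> by_cases hmem' : a ∈ (ξ'.1 n).1 <;>
    simp [hmem, hmem'] at h2 ⊢

lemma mLe_antisymm_inr {ξ ξ' : Bnd I} (h1 : mLe (Sum.inr ξ) (Sum.inr ξ'))
    (h2 : mLe (Sum.inr ξ') (Sum.inr ξ)) : ξ = ξ' :=
  bnd_ext (fun n => hLe_antisymm (h1 n) (h2 n))

include hsymm hirr hCF

lemma mLe_inl_of_hLe {x y : Heap I} (h : hLe x y) : mLe (Sum.inl x) (Sum.inl y) :=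
  fun n => pp_mono hsymm hirr hCF h n

lemma mLe_of_hLe_of_mLe {u v : Heap I} {ζ : MB I} (h : hLe u v)
    (h2 : mLe (Sum.inl v) ζ) : mLe (Sum.inl u) ζ :=
  mLe_trans (mLe_inl_of_hLe hsymm hirr hCF h) h2

omit hsymm hirr in
lemma hLe_pp_of_mLe {x : Heap I} {ζ : MB I} (h : mLe (Sum.inl x) ζ) {n : ℕ}
    (hn : height x ≤ n) : hLe x (pp ζ n) := by
  have h1 := h n
  rwa [pp_inl, ppSeq_height hCF x hn] at h1

lemma mLe_inl_inr_of_hLe_pp {x : Heap I} {ξ : Bnd I} {m : ℕ} (h : hLe x (ppSeq ξ.1 m)) :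
    mLe (Sum.inl x) (Sum.inr ξ) := by
  intro n
  have h1 : hLe (ppSeq (cf I x) n) (ppSeq (cf I (ppSeq ξ.1 m)) n) :=
    pp_mono hsymm hirr hCF h n
  rw [cf_ppSeq hCF ξ.2.2 m, ppSeq_trunc] at h1
  exact hLe_trans h1 (hLe_ppSeq _ (min_le_left _ _))

lemma hLe_of_mLe_inl_inl {x y : Heap I} (h : mLe (Sum.inl x) (Sum.inl y)) : hLe x y := by
  have h1 := h (max (height x) (height y))
  rwa [pp_inl, pp_inl, ppSeq_height hCF x (le_max_left _ _),
    ppSeq_height hCF y (le_max_right _ _)] at h1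

omit hsymm hirr in
lemma not_mLe_inr_inl {ξ : Bnd I} {v : Heap I} : ¬ mLe (Sum.inr ξ) (Sum.inl v) := by
  intro h
  have h1 := len_le_of_hLe (h (len v + 1))
  have h2 := len_ppSeq_ge ξ (len v + 1)
  have h3 := len_le_of_hLe (hLe_ppSeq_cf hCF v (len v + 1))
  rw [pp_inl, pp_inr] at h1
  omega

omit hsymm hirr in
lemma hLe_pp_of_mem_cyl {x : Heap I} {ξ : Bnd I} (h : ξ ∈ cyl x) {n : ℕ}
    (hn : height x ≤ n) : hLe x (ppSeq ξ.1 n) := by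
  have h1 := hLe_pp_of_mLe hCF h hn
  rwa [pp_inr] at h1

lemma mem_cyl_of_hLe_pp {x : Heap I} {ξ : Bnd I} {m : ℕ} (h : hLe x (ppSeq ξ.1 m)) :
    ξ ∈ cyl x :=
  mLe_inl_inr_of_hLe_pp hsymm hirr hCF h

omit hsymm hirr in
lemma pp_mem_cyl (ξ : Bnd I) (n : ℕ) : ξ ∈ cyl (ppSeq ξ.1 n) := by
  show mLe _ _
  intro m
  rw [pp_inl, cf_ppSeq hCF ξ.2.2 n, ppSeq_trunc, pp_inr]
  exact hLe_ppSeq _ (min_le_left _ _)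

lemma cyl_mono {x y : Heap I} (h : hLe x y) : cyl y ⊆ cyl x := by
  intro ξ hξ
  exact mLe_trans (mLe_inl_of_hLe hsymm hirr hCF h) hξ

omit hsymm hirr in
lemma mem_cyl_one (ξ : Bnd I) : ξ ∈ cyl (1 : Heap I) := by
  show mLe _ _
  intro n
  rw [pp_inl_one hCF]
  exact hLe_one _

end MLe


/-! ### Concatenation calculus -/

section Conc

variable {I : S → S → Prop} [DecidableEq S]
variable (hsymm : ∀ a b : S, I a b → I b a) (hirr : ∀ a : S, ¬ I a a)
variable (hCF : ∀ x : Heap I, ∃! c : ℕ → Cl I, CFprop I c x)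
variable (hconc : ∀ (x : Heap I) (ξ : Bnd I), ∃ ζ : Bnd I, IsConc x ξ (Sum.inr ζ))
variable (hconcInj : ∀ (x : Heap I) (ζ ζ' : Bnd I), concB x ζ = concB x ζ' → ζ = ζ')
variable (hsubEx : ∀ (x : Heap I) (ξ : Bnd I), ξ ∈ cyl x → ∃ ζ : Bnd I, concB x ζ = ξ)

lemma monotone_bounded_stab {F : ℕ → ℕ} (hmono : ∀ m m', m ≤ m' → F m ≤ F m') {B : ℕ}
    (hB : ∀ m, F m ≤ B) : ∃ m₀, ∀ m, m₀ ≤ m → F m = F m₀ := by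
  have hne : (Set.range F).Nonempty := ⟨F 0, 0, rfl⟩
  have hbdd : BddAbove (Set.range F) := ⟨B, by rintro y ⟨m, rfl⟩; exact hB m⟩
  obtain ⟨m₀, hm₀⟩ := Nat.sSup_mem hne hbdd
  refine ⟨m₀, fun m hm => ?_⟩
  have h1 : F m ≤ sSup (Set.range F) := le_csSup hbdd ⟨m, rfl⟩
  have h2 : F m₀ ≤ F m := hmono _ _ hm
  omega

include hconc

lemma isConc_concB (x : Heap I) (ζ : Bnd I) : IsConc x ζ (Sum.inr (concB x ζ)) := by
  unfold concB
  rw [dif_pos (hconc x ζ)]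
  exact (hconc x ζ).choose_spec

lemma concB_le (x : Heap I) (ζ : Bnd I) (n : ℕ) :
    mLe (Sum.inl (x * ppSeq ζ.1 n)) (Sum.inr (concB x ζ)) :=
  (isConc_concB hconc x ζ).1 n

lemma concB_lub (x : Heap I) (ζ : Bnd I) {η : MB I}
    (h : ∀ n, mLe (Sum.inl (x * ppSeq ζ.1 n)) η) : mLe (Sum.inr (concB x ζ)) η :=
  (isConc_concB hconc x ζ).2 η h

lemma concB_mem_cyl (x : Heap I) (ζ : Bnd I) : concB x ζ ∈ cyl x := by
  have h1 := concB_le hconc x ζ 0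
  rwa [ppSeq_zero, mul_one] at h1

lemma concB_unique {x : Heap I} {ζ η : Bnd I} (h : IsConc x ζ (Sum.inr η)) :
    concB x ζ = η :=
  mLe_antisymm_inr ((isConc_concB hconc x ζ).2 _ h.1) (h.2 _ (isConc_concB hconc x ζ).1)

omit hconc

include hsymm hirr hCF

lemma clique_eq_of_mul_eq {u : Heap I} {γ δ : Cl I} (h : u * γ.heap = u * δ.heap) :
    γ = δ := by
  apply Cl.ext; ext a
  have h2 := congrArg (occ a) h
  rw [occ_mul, occ_mul, occ_cliqueHeap, occ_cliqueHeap] at h2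
  by_cases hmem : a ∈ γ.1 <;> by_cases hmem' : a ∈ δ.1 <;> simp [hmem, hmem'] at h2 ⊢

/-- Compactness: finite prefixes of a least upper bound are dominated by chain elements. -/
lemma lub_compact {u : ℕ → Heap I} {ξ : Bnd I}
    (humono : ∀ m, hLe (u m) (u (m+1)))
    (hub : ∀ m, mLe (Sum.inl (u m)) (Sum.inr ξ))
    (hlub : ∀ ζ : MB I, (∀ m, mLe (Sum.inl (u m)) ζ) → mLe (Sum.inr ξ) ζ) :
    ∀ k, ∃ m, hLe (ppSeq ξ.1 k) (u m) := by
  classical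
  have humono' : ∀ m m', m ≤ m' → hLe (u m) (u m') := by
    intro m m' h
    induction m' with
    | zero => have : m = 0 := by omega
              subst this; exact hLe_refl _
    | succ m' ih =>
      rcases Nat.lt_or_ge m (m'+1) with h1 | h1
      · exact hLe_trans (ih (by omega)) (humono m')
      · have : m = m' + 1 := by omega
        subst this; exact hLe_refl _
  have hseq : ∀ k m m', m ≤ m' →
      hLe (ppSeq (cf I (u m)) k) (ppSeq (cf I (u m')) k) := by
    intro k m m' h
    exact pp_mono hsymm hirr hCF (humono' m m' h) k
  have hbdd : ∀ k m, hLe (ppSeq (cf I (u m)) k) (ppSeq ξ.1 k) := by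
    intro k m
    have := hub m k
    rwa [pp_inl, pp_inr] at this
  -- stabilization levels
  have hM : ∀ k, ∃ m₀, ∀ m, m₀ ≤ m →
      len (ppSeq (cf I (u m)) k) = len (ppSeq (cf I (u m₀)) k) := by
    intro k
    exact monotone_bounded_stab
      (fun m m' h => len_le_of_hLe (hseq k m m' h))
      (fun m => len_le_of_hLe (hbdd k m))
  choose M hMs using hM
  set w : ℕ → Heap I := fun k => ppSeq (cf I (u (M k))) k with hw
  have hwst : ∀ k m, M k ≤ m → ppSeq (cf I (u m)) k = w k := by
    intro k m hm
    exact ((eq_of_hLe_of_len_le (hseq k (M k) m hm) (le_of_eq (hMs k m hm)))).symm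
  have hwall : ∀ k m, hLe (ppSeq (cf I (u m)) k) (w k) := by
    intro k m
    rcases le_or_gt m (M k) with h | h
    · exact hseq k m (M k) h
    · rw [hwst k m (le_of_lt h)]; exact hLe_refl _
  have hwle : ∀ k, hLe (w k) (ppSeq ξ.1 k) := fun k => hbdd k (M k)
  set δc : ℕ → Cl I := fun k => cf I (u (max (M k) (M (k+1)))) k with hδc
  have hδeq : ∀ k m, M k ≤ m → M (k+1) ≤ m → cf I (u m) k = δc k := by
    intro k m h1 h2
    have e1 : ppSeq (cf I (u m)) (k+1) = ppSeq (cf I (u m)) k * (cf I (u m) k).heap :=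
      ppSeq_succ _ _
    set m' := max (M k) (M (k+1)) with hm'
    have e2 : ppSeq (cf I (u m')) (k+1) = ppSeq (cf I (u m')) k * (cf I (u m') k).heap :=
      ppSeq_succ _ _
    rw [hwst k m h1, hwst (k+1) m h2] at e1
    rw [hwst k m' (le_max_left _ _), hwst (k+1) m' (le_max_right _ _)] at e2
    exact clique_eq_of_mul_eq hsymm hirr hCF (e1.symm.trans e2)
  have hwsucc : ∀ k, w (k+1) = w k * (δc k).heap := by
    intro k
    set m := max (max (M k) (M (k+1))) (M (k+1)) with hm
    have e1 : ppSeq (cf I (u m)) (k+1) = ppSeq (cf I (u m)) k * (cf I (u m) k).heap :=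
      ppSeq_succ _ _
    rw [hwst (k+1) m (by omega), hwst k m (by omega),
      hδeq k m (by omega) (by omega)] at e1
    exact e1
  have hwmono : ∀ k k', k ≤ k' → hLe (w k) (w k') := by
    intro k k' h
    induction k' with
    | zero => have : k = 0 := by omega
              subst this; exact hLe_refl _
    | succ k' ih =>
      rcases Nat.lt_or_ge k (k'+1) with h1 | h1
      · exact hLe_trans (ih (by omega)) (by rw [hwsucc k']; exact hLe_mul_right _ _)
      · have : k = k' + 1 := by omega
        subst this; exact hLe_refl _
  have hδmove : ∀ k, Move (δc k) (δc (k+1)) := by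
    intro k
    set m := max (max (M k) (M (k+1))) (M ((k+1)+1)) with hm
    rw [← hδeq k m (by omega) (by omega), ← hδeq (k+1) m (by omega) (by omega)]
    exact cf_move hCF (u m) k
  by_cases hcase : ∀ k, (δc k).1.Nonempty
  · -- the limit is a boundary point
    set η : Bnd I := ⟨δc, hcase, hδmove⟩ with hη
    have hppη : ∀ k, ppSeq η.1 k = w k := by
      intro k
      induction k with
      | zero =>
        rw [ppSeq_zero]
        show (1 : Heap I) = ppSeq (cf I (u (M 0))) 0
        rw [ppSeq_zero]
      | succ k ih => rw [ppSeq_succ, ih, hwsucc]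
    have hubη : ∀ m, mLe (Sum.inl (u m)) (Sum.inr η) := by
      intro m n
      rw [pp_inl, pp_inr, hppη]
      exact hwall n m
    have hξη := hlub (Sum.inr η) hubη
    intro k
    refine ⟨M k, ?_⟩
    have h1 := hξη k
    rw [pp_inr, pp_inr, hppη] at h1
    exact hLe_trans h1 (hLe_ppSeq_cf hCF (u (M k)) k)
  · -- degenerate case: the chain stabilizes, contradiction
    exfalso
    push_neg at hcase
    obtain ⟨k₀, hk₀⟩ := hcase
    have hk₀' : δc k₀ = emptyCl I := by
      apply Cl.ext
      rw [hk₀]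
      rfl
    have hempty : ∀ j, k₀ ≤ j → δc j = emptyCl I := by
      intro j hj
      induction j with
      | zero => have : k₀ = 0 := by omega
                rw [← this]; exact hk₀'
      | succ j ih =>
        rcases Nat.lt_or_ge k₀ (j+1) with h1 | h1
        · have hj' := ih (by omega)
          apply eq_empty_of_move_empty
          rw [← hj']
          exact hδmove j
        · have : k₀ = j + 1 := by omega
          rw [← this]; exact hk₀'
    have hwconst : ∀ j, k₀ ≤ j → w j = w k₀ := by
      intro j hj
      induction j with
      | zero => have : k₀ = 0 := by omega
                rw [this]
      | succ j ih =>
        rcases Nat.lt_or_ge k₀ (j+1) with h1 | h1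
        · rw [hwsucc j, hempty j (by omega), heap_emptyCl, mul_one]
          exact ih (by omega)
        · have : k₀ = j + 1 := by omega
          rw [this]
    have hule : ∀ m, hLe (u m) (w k₀) := by
      intro m
      have h1 : u m = ppSeq (cf I (u m)) (max (height (u m)) k₀) := by
        rw [ppSeq_height hCF (u m) (le_max_left _ _)]
      rw [h1]
      refine hLe_trans (hwall _ m) ?_
      rw [hwconst _ (le_max_right _ _)]
      exact hLe_refl _
    have hlub2 := hlub (Sum.inl (w k₀)) (fun m => mLe_inl_of_hLe hsymm hirr hCF (hule m))
    exact not_mLe_inr_inl hCF hlub2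

include hconc

lemma concB_compact (x : Heap I) (ζ : Bnd I) (k : ℕ) :
    ∃ m, hLe (ppSeq (concB x ζ).1 k) (x * ppSeq ζ.1 m) := by
  apply lub_compact hsymm hirr hCF (u := fun m => x * ppSeq ζ.1 m)
  · intro m
    exact hLe_mul_left x (hLe_ppSeq _ (by omega))
  · intro m
    exact concB_le hconc x ζ m
  · intro η hη
    exact concB_lub hconc x ζ hη

lemma mLe_concB_of_mLe {w : Heap I} {ζ : Bnd I} (x : Heap I)
    (h : mLe (Sum.inl w) (Sum.inr ζ)) :
    mLe (Sum.inl (x * w)) (Sum.inr (concB x ζ)) := by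
  have h1 : hLe w (ppSeq ζ.1 (height w)) := by
    have := hLe_pp_of_mLe hCF h (le_refl (height w))
    rwa [pp_inr] at this
  exact mLe_of_hLe_of_mLe hsymm hirr hCF (hLe_mul_left x h1) (concB_le hconc x ζ (height w))

lemma concB_assoc (x y : Heap I) (ζ : Bnd I) :
    concB (x * y) ζ = concB x (concB y ζ) := by
  apply concB_unique hconc
  constructor
  · intro n
    have h1 : mLe (Sum.inl (y * ppSeq ζ.1 n)) (Sum.inr (concB y ζ)) := concB_le hconc y ζ n
    have h2 := mLe_concB_of_mLe hsymm hirr hCF hconc x h1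
    show mLe (Sum.inl (x * y * pp (Sum.inr ζ) n)) _
    rw [pp_inr, mul_assoc]
    exact h2
  · intro η hη
    apply concB_lub hconc x (concB y ζ)
    intro n
    obtain ⟨m, hm⟩ := concB_compact hsymm hirr hCF hconc y ζ n
    have h3 : hLe (x * ppSeq (concB y ζ).1 n) (x * y * ppSeq ζ.1 m) := by
      rw [mul_assoc]
      exact hLe_mul_left x hm
    have h4 := hη m
    rw [show pp (Sum.inr ζ) m = ppSeq ζ.1 m from rfl] at h4
    exact mLe_of_hLe_of_mLe hsymm hirr hCF h3 h4

lemma concB_one (ζ : Bnd I) : concB 1 ζ = ζ := by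
  apply concB_unique hconc
  constructor
  · intro n
    show mLe (Sum.inl (1 * pp (Sum.inr ζ) n)) (Sum.inr ζ)
    rw [one_mul, pp_inr]
    exact pp_mem_cyl hCF ζ n
  · intro η hη
    intro k
    have h1 := hη k
    rw [show pp (Sum.inr ζ) k = ppSeq ζ.1 k from rfl, one_mul] at h1
    have h2 := h1 k
    rw [pp_inl, cf_ppSeq hCF ζ.2.2 k, ppSeq_trunc, min_self] at h2
    rwa [pp_inr]

omit hsymm hirr hconc hCF

include hsubEx

lemma concB_subB {x : Heap I} {ξ : Bnd I} (h : ξ ∈ cyl x) : concB x (subB ξ x) = ξ := by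
  unfold subB
  rw [dif_pos (hsubEx x ξ h)]
  exact (hsubEx x ξ h).choose_spec

omit hsubEx

include hconc hconcInj hsubEx

lemma subB_concB (x : Heap I) (ζ : Bnd I) : subB (concB x ζ) x = ζ :=
  hconcInj _ _ _ (concB_subB hsubEx (concB_mem_cyl hconc x ζ))

omit hconc hconcInj hsubEx

include hconc

lemma subB_not_mem {x : Heap I} {ξ : Bnd I} (h : ξ ∉ cyl x) : subB ξ x = ξ := by
  unfold subB
  rw [dif_neg]
  rintro ⟨ζ, rfl⟩
  exact h (concB_mem_cyl hconc x ζ)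

include hsubEx

lemma cyl_eq_range (x : Heap I) : cyl x = Set.range (concB x) := by
  apply Set.eq_of_subset_of_subset
  · intro ξ h
    obtain ⟨ζ, hζ⟩ := hsubEx x ξ h
    exact ⟨ζ, hζ⟩
  · rintro ξ ⟨ζ, rfl⟩
    exact concB_mem_cyl hconc x ζ

include hsymm hirr hCF hconcInj

lemma cyl_inter_preimage (x u : Heap I) :
    cyl x ∩ (fun ξ => subB ξ x) ⁻¹' (cyl u) = cyl (x * u) := by
  ext ξ
  constructor
  · rintro ⟨h1, h2⟩
    have he : ξ = concB x (subB ξ x) := (concB_subB hsubEx h1).symm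
    rw [he]
    simp only [Set.mem_preimage] at h2
    obtain ⟨ρ, hρ⟩ := hsubEx u (subB ξ x) h2
    rw [← hρ, ← concB_assoc hsymm hirr hCF hconc]
    exact concB_mem_cyl hconc _ _
  · intro h
    obtain ⟨ρ, hρ⟩ := hsubEx (x*u) ξ h
    constructor
    · rw [← hρ, concB_assoc hsymm hirr hCF hconc]
      exact concB_mem_cyl hconc _ _
    · show subB ξ x ∈ cyl u
      rw [← hρ, concB_assoc hsymm hirr hCF hconc, subB_concB hconc hconcInj hsubEx]
      exact concB_mem_cyl hconc _ _

lemma subB_one (ξ : Bnd I) : subB ξ 1 = ξ := by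
  have h1 := concB_subB hsubEx (mem_cyl_one hCF ξ)
  rw [concB_one hsymm hirr hCF hconc] at h1
  exact h1

end Conc


/-! ### Structure of asynchronous stopping times -/

section VStruct

variable {I : S → S → Prop} [DecidableEq S]
variable (hsymm : ∀ a b : S, I a b → I b a) (hirr : ∀ a : S, ¬ I a a)
variable (hCF : ∀ x : Heap I, ∃! c : ℕ → Cl I, CFprop I c x)
variable (hconc : ∀ (x : Heap I) (ξ : Bnd I), ∃ ζ : Bnd I, IsConc x ξ (Sum.inr ζ))
variable (hconcInj : ∀ (x : Heap I) (ζ ζ' : Bnd I), concB x ζ = concB x ζ' → ζ = ζ')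
variable (hsubEx : ∀ (x : Heap I) (ξ : Bnd I), ξ ∈ cyl x → ∃ ζ : Bnd I, concB x ζ = ξ)
variable {V : Bnd I → MB I} (hV : IsAST V)

include hV in
lemma V_mem_cyl {ξ : Bnd I} {x : Heap I} (h : V ξ = Sum.inl x) : ξ ∈ cyl x := by
  have h1 := hV.1 ξ
  rw [h] at h1
  exact h1

include hV in
lemma V_const_on_cyl {ξ : Bnd I} {x : Heap I} (h : V ξ = Sum.inl x) :
    ∀ ξ' ∈ cyl x, V ξ' = Sum.inl x := by
  intro ξ' h'
  rw [hV.2 ξ ξ' x h h', h]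

lemma shiftV_eq_subB {ξ : Bnd I} {x : Heap I} (h : V ξ = Sum.inl x) :
    shiftV V ξ = subB ξ x := by
  unfold shiftV
  rw [h]

lemma shiftV_eq_id {ξ : Bnd I} (h : ∀ x : Heap I, V ξ ≠ Sum.inl x) : shiftV V ξ = ξ := by
  unfold shiftV
  rcases h2 : V ξ with x | ρ
  · exact absurd h2 (h x)
  · rfl

include hsymm hirr hCF hconc hconcInj hsubEx hV

/-- The key structure theorem for the iterated stopping times. -/
lemma iter_spec : ∀ (n : ℕ) (ξ : Bnd I) (u : Heap I), iter V n ξ = Sum.inl u →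
    (ξ ∈ cyl u ∧ (∀ ξ' ∈ cyl u, iter V n ξ' = Sum.inl u) ∧
      (shiftV V)^[n] ξ = subB ξ u) := by
  intro n
  induction n with
  | zero =>
    intro ξ u hu
    have hu1 : (1 : Heap I) = u := by
      have : iter V 0 ξ = Sum.inl 1 := rfl
      rw [this] at hu
      exact Sum.inl.injEq _ _ |>.mp hu
    subst hu1
    refine ⟨mem_cyl_one hCF ξ, fun ξ' _ => rfl, ?_⟩
    rw [Function.iterate_zero_apply, subB_one hsymm hirr hCF hconc hconcInj hsubEx]
  | succ n ih =>
    intro ξ u hu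
    rcases h1 : iter V n ξ with x | ρ
    · rcases h2 : V (subB ξ x) with y | ρ'
      · have hu' : u = x * y := by
          have : iter V (n+1) ξ = Sum.inl (x * y) := by
            simp only [iter, h1, h2]; rfl
          rw [this] at hu
          exact (Sum.inl.injEq _ _ |>.mp hu).symm
        subst hu'
        obtain ⟨hξx, hstab, hiter⟩ := ih ξ x h1
        have hζy : subB ξ x ∈ cyl y := V_mem_cyl hV h2
        have hξ : ξ ∈ cyl (x * y) := by
          rw [← concB_subB hsubEx hξx]
          obtain ⟨ρ', hρ'⟩ := hsubEx y (subB ξ x) hζy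
          rw [← hρ', ← concB_assoc hsymm hirr hCF hconc]
          exact concB_mem_cyl hconc _ _
        refine ⟨hξ, ?_, ?_⟩
        · intro ξ' h'
          obtain ⟨ρ, hρ⟩ := hsubEx (x*y) ξ' h'
          have hξ'x : ξ' ∈ cyl x := by
            rw [← hρ, concB_assoc hsymm hirr hCF hconc]
            exact concB_mem_cyl hconc _ _
          have hsub : subB ξ' x = concB y ρ := by
            rw [← hρ, concB_assoc hsymm hirr hCF hconc,
              subB_concB hconc hconcInj hsubEx]
          have hVs : V (subB ξ' x) = Sum.inl y := by
            rw [hsub]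
            exact V_const_on_cyl hV h2 _ (concB_mem_cyl hconc y ρ)
          have hit : iter V n ξ' = Sum.inl x := hstab ξ' hξ'x
          simp only [iter, hit, hVs]; rfl
        · rw [Function.iterate_succ_apply', hiter, shiftV_eq_subB h2]
          obtain ⟨ρ, hρ⟩ := hsubEx (x*y) ξ hξ
          have e1 : subB ξ (x*y) = ρ := by
            rw [← hρ]; exact subB_concB hconc hconcInj hsubEx (x*y) ρ
          have e2 : subB ξ x = concB y ρ := by
            rw [← hρ, concB_assoc hsymm hirr hCF hconc]
            exact subB_concB hconc hconcInj hsubEx x _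
          rw [e2, e1]
          exact subB_concB hconc hconcInj hsubEx y ρ
      · exfalso
        have : iter V (n+1) ξ = Sum.inr (concB x ρ') := by
          simp only [iter, h1, h2]; rfl
        rw [this] at hu
        exact Sum.inr_ne_inl hu
    · exfalso
      have : iter V (n+1) ξ = Sum.inr ξ := by
        simp only [iter, h1]; rfl
      rw [this] at hu
      exact Sum.inr_ne_inl hu

omit hsymm hirr hCF hconc hconcInj hsubEx hV in
lemma iter_le {n m : ℕ} (h : n ≤ m) {ξ : Bnd I} {u : Heap I}
    (hu : iter V m ξ = Sum.inl u) : ∃ x, iter V n ξ = Sum.inl x ∧ hLe x u := by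
  induction m generalizing u with
  | zero =>
    have hn : n = 0 := by omega
    subst hn
    exact ⟨u, hu, hLe_refl u⟩
  | succ m ih =>
    rcases Nat.lt_or_ge n (m+1) with h1 | h1
    · rcases h2 : iter V m ξ with x | ρ
      · rcases h3 : V (subB ξ x) with y | ρ'
        · have hu' : u = x * y := by
            have : iter V (m+1) ξ = Sum.inl (x * y) := by simp only [iter, h2, h3]; rfl
            rw [this] at hu
            exact (Sum.inl.injEq _ _ |>.mp hu).symm
          obtain ⟨x', hx', hle⟩ := ih (by omega) h2
          exact ⟨x', hx', hu' ▸ hLe_trans hle (hLe_mul_right x y)⟩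
        · exfalso
          have : iter V (m+1) ξ = Sum.inr (concB x ρ') := by simp only [iter, h2, h3]; rfl
          rw [this] at hu; exact Sum.inr_ne_inl hu
      · exfalso
        have : iter V (m+1) ξ = Sum.inr ξ := by simp only [iter, h2]; rfl
        rw [this] at hu; exact Sum.inr_ne_inl hu
    · have hn : n = m + 1 := by omega
      subst hn
      exact ⟨u, hu, hLe_refl u⟩

end VStruct


/-! ### Measurability infrastructure -/

section MeasA

variable {I : S → S → Prop} [Fintype S] [DecidableEq S]
variable (hsymm : ∀ a b : S, I a b → I b a) (hirr : ∀ a : S, ¬ I a a)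
variable (hCF : ∀ x : Heap I, ∃! c : ℕ → Cl I, CFprop I c x)
variable (hconc : ∀ (x : Heap I) (ξ : Bnd I), ∃ ζ : Bnd I, IsConc x ξ (Sum.inr ζ))
variable (hconcInj : ∀ (x : Heap I) (ζ ζ' : Bnd I), concB x ζ = concB x ζ' → ζ = ζ')
variable (hsubEx : ∀ (x : Heap I) (ξ : Bnd I), ξ ∈ cyl x → ∃ ζ : Bnd I, concB x ζ = ξ)

lemma countable_heap : Countable (Heap I) := by
  have : Countable (FreeMonoid S) := inferInstanceAs (Countable (List S))
  exact Quotient.countable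

lemma measurableSet_cyl (x : Heap I) : MeasurableSet (cyl x) :=
  MeasurableSpace.measurableSet_generateFrom ⟨x, rfl⟩

include hCF

lemma len_ppSeq_le (c : ℕ → Cl I) (n : ℕ) : len (ppSeq c n) ≤ n * Fintype.card S := by
  induction n with
  | zero => rw [ppSeq_zero, len_one]; omega
  | succ n ih =>
    rw [ppSeq_succ, len_mul, len_cliqueHeap, Nat.succ_mul]
    have := Finset.card_le_univ (c n).1
    omega

lemma finite_height_le (n : ℕ) : {w : Heap I | height w ≤ n}.Finite := by
  have h1 : {w : Heap I | height w ≤ n} ⊆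
      (fun l => mkh I l) '' {l : List S | l.length ≤ n * Fintype.card S} := by
    intro w hw
    obtain ⟨l, hl⟩ := heap_exists_list w
    refine ⟨l, ?_, hl.symm⟩
    have h2 : len w ≤ n * Fintype.card S := by
      calc len w = len (ppSeq (cf I w) (height w)) := by
              rw [ppSeq_height hCF w (le_refl (height w))]
        _ ≤ height w * Fintype.card S := len_ppSeq_le hCF _ _
        _ ≤ n * Fintype.card S := Nat.mul_le_mul_right _ hw
    show l.length ≤ n * Fintype.card S
    rw [hl, len_mkh] at h2
    exact h2
  exact ((List.finite_length_le S _).image _).subset h1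

/-- The set of boundary points whose `n`-prefix is exactly `w`. -/
def Tset (n : ℕ) (w : Heap I) : Set (Bnd I) := {ξ : Bnd I | ppSeq ξ.1 n = w}

omit hCF in
lemma Tset_disjoint {n : ℕ} {w w' : Heap I} (h : w ≠ w') :
    Disjoint (Tset n w) (Tset n w') := by
  rw [Set.disjoint_left]
  intro ξ h1 h2
  exact h ((Set.mem_setOf.mp h1).symm.trans h2)

lemma Tset_empty {n : ℕ} {w : Heap I} (h : ¬ height w ≤ n) : Tset n w = ∅ := by
  ext ξ
  simp only [Tset, Set.mem_setOf, Set.mem_empty_iff_false, iff_false]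
  intro h1
  exact h (h1 ▸ height_ppSeq_le hCF ξ.2.2 n)

lemma Tset_eq {n : ℕ} {w : Heap I} (hw : height w ≤ n) :
    Tset n w = cyl w \ ⋃ (v ∈ {v : Heap I | height v ≤ n ∧ ¬ hLe v w}), cyl v := by
  ext ξ
  constructor
  · intro h1
    have h1' : ppSeq ξ.1 n = w := h1
    constructor
    · rw [← h1']; exact pp_mem_cyl hCF ξ n
    · intro hmem
      obtain ⟨v, hv, hv3⟩ := Set.mem_iUnion₂.mp hmem
      obtain ⟨hv1, hv2⟩ := Set.mem_setOf.mp hv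
      exact hv2 (h1' ▸ hLe_pp_of_mem_cyl hCF hv3 hv1)
  · rintro ⟨h1, h2⟩
    have h3 : hLe w (ppSeq ξ.1 n) := hLe_pp_of_mem_cyl hCF h1 hw
    have h4 : hLe (ppSeq ξ.1 n) w := by
      by_contra h5
      exact h2 (Set.mem_iUnion₂.mpr
        ⟨ppSeq ξ.1 n, Set.mem_setOf.mpr ⟨height_ppSeq_le hCF ξ.2.2 n, h5⟩,
          pp_mem_cyl hCF ξ n⟩)
    exact hLe_antisymm h4 h3

lemma measurableSet_Tset (n : ℕ) (w : Heap I) : MeasurableSet (Tset n w) := by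
  by_cases hw : height w ≤ n
  · rw [Tset_eq hCF hw]
    have : Countable (Heap I) := countable_heap
    exact (measurableSet_cyl w).diff
      (MeasurableSet.biUnion (Set.to_countable _) (fun v _ => measurableSet_cyl v))
  · rw [Tset_empty hCF hw]
    exact MeasurableSet.empty

/-- The finite set of possible `n`-prefixes above a finite family of heaps. -/
noncomputable def upFinS (hCF : ∀ x : Heap I, ∃! c : ℕ → Cl I, CFprop I c x) (n : ℕ)
    (t : Finset (Heap I)) : Finset (Heap I) :=
  ((finite_height_le hCF n).subset
    (fun w (hw : w ∈ {w : Heap I | height w ≤ n ∧ ∀ x ∈ t, hLe x w}) => hw.1)).toFinset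

lemma mem_upFinS {n : ℕ} {t : Finset (Heap I)} {w : Heap I} :
    w ∈ upFinS hCF n t ↔ height w ≤ n ∧ ∀ x ∈ t, hLe x w := by
  unfold upFinS
  rw [Set.Finite.mem_toFinset]
  rfl

include hsymm hirr

lemma biInter_cyl_eq_biUnion_T (t : Finset (Heap I)) {n : ℕ}
    (hn : ∀ x ∈ t, height x ≤ n) :
    (⋂ x ∈ t, cyl x) = ⋃ w ∈ upFinS hCF n t, Tset n w := by
  ext ξ
  constructor
  · intro h
    have hmem : ∀ x ∈ t, ξ ∈ cyl x := fun x hx => Set.mem_iInter₂.mp h x hx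
    apply Set.mem_iUnion₂.mpr
    refine ⟨ppSeq ξ.1 n, ?_, rfl⟩
    rw [mem_upFinS hCF]
    exact ⟨height_ppSeq_le hCF ξ.2.2 n,
      fun x hx => hLe_pp_of_mem_cyl hCF (hmem x hx) (hn x hx)⟩
  · intro h
    obtain ⟨w, hw, hw3⟩ := Set.mem_iUnion₂.mp h
    rw [mem_upFinS hCF] at hw
    apply Set.mem_iInter₂.mpr
    intro x hx
    have h4 : ξ ∈ cyl w := by
      rw [← Set.mem_setOf.mp hw3]
      exact pp_mem_cyl hCF ξ n
    exact cyl_mono hsymm hirr hCF (hw.2 x hx) h4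

lemma cyl_eq_biUnion_T (x : Heap I) {n : ℕ} (hx : height x ≤ n) :
    cyl x = ⋃ w ∈ upFinS hCF n {x}, Tset n w := by
  have h1 := biInter_cyl_eq_biUnion_T hsymm hirr hCF (t := {x}) (n := n)
    (by intro x' hx'; rw [Finset.mem_singleton] at hx'; rwa [hx'])
  rwa [Finset.set_biInter_singleton] at h1

include hconc hconcInj hsubEx

lemma g_preimage_cyl (y u : Heap I) :
    (fun ξ => subB ξ y) ⁻¹' (cyl u) = cyl (y * u) ∪ (cyl u \ cyl y) := by
  have key := cyl_inter_preimage hsymm hirr hCF hconc hconcInj hsubEx y u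
  ext ξ
  constructor
  · intro h3
    by_cases h : ξ ∈ cyl y
    · left; rw [← key]; exact ⟨h, h3⟩
    · right
      refine ⟨?_, h⟩
      have h4 : subB ξ y = ξ := subB_not_mem hconc h
      simp only [Set.mem_preimage] at h3
      rwa [h4] at h3
  · intro h3
    rcases h3 with h3 | ⟨h3, h4⟩
    · rw [← key] at h3
      exact h3.2
    · show subB ξ y ∈ cyl u
      rw [subB_not_mem hconc h4]
      exact h3

lemma measurable_g (y : Heap I) : Measurable (fun ξ : Bnd I => subB ξ y) := by
  apply measurable_generateFrom
  rintro t ⟨u, rfl⟩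
  rw [g_preimage_cyl hsymm hirr hCF hconc hconcInj hsubEx y u]
  exact (measurableSet_cyl _).union ((measurableSet_cyl _).diff (measurableSet_cyl _))

end MeasA


/-! ### The Bernoulli property on the π-system -/

section MeasB

attribute [local instance 10] Classical.propDecidable

variable {I : S → S → Prop} [Fintype S] [DecidableEq S]
variable (hsymm : ∀ a b : S, I a b → I b a) (hirr : ∀ a : S, ¬ I a a)
variable (hCF : ∀ x : Heap I, ∃! c : ℕ → Cl I, CFprop I c x)
variable (hconc : ∀ (x : Heap I) (ξ : Bnd I), ∃ ζ : Bnd I, IsConc x ξ (Sum.inr ζ))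
variable (hconcInj : ∀ (x : Heap I) (ζ ζ' : Bnd I), concB x ζ = concB x ζ' → ζ = ζ')
variable (hsubEx : ∀ (x : Heap I) (ξ : Bnd I), ξ ∈ cyl x → ∃ ζ : Bnd I, concB x ζ = ξ)
variable (P : Measure (Bnd I)) (hP : IsBernoulli P)

include hsymm hirr hCF hconc hconcInj hsubEx hP

lemma SB_T (y : Heap I) (n : ℕ) (k : ℕ) (w : Heap I) (hw : height w ≤ n)
    (hk : ((upFinS hCF n {w}).filter (fun w' => ¬ w' = w)).card ≤ k) :
    P (cyl y ∩ (fun ξ : Bnd I => subB ξ y) ⁻¹' (Tset n w))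
      = P (cyl y) * P (Tset n w) := by
  haveI := hP.1
  induction k generalizing w with
  | zero =>
    rw [Nat.le_zero, Finset.card_eq_zero] at hk
    -- no strict uppers: cyl w = Tset n w
    have hwU : w ∈ upFinS hCF n {w} := by
      rw [mem_upFinS hCF]
      exact ⟨hw, fun x hx => by rw [Finset.mem_singleton] at hx; rw [hx]; exact hLe_refl w⟩
    have hU : upFinS hCF n {w} = {w} := by
      ext w'
      constructor
      · intro h
        by_cases he : w' = w
        · rw [he]; exact Finset.mem_singleton_self w
        · exfalso
          have : w' ∈ (upFinS hCF n {w}).filter (fun w' => ¬ w' = w) :=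
            Finset.mem_filter.mpr ⟨h, he⟩
          rw [hk] at this
          exact Finset.notMem_empty _ this
      · intro h
        rw [Finset.mem_singleton] at h
        rw [h]; exact hwU
    have hcylT : cyl w = Tset n w := by
      rw [cyl_eq_biUnion_T hsymm hirr hCF w hw, hU]
      simp
    rw [← hcylT, cyl_inter_preimage hsymm hirr hCF hconc hconcInj hsubEx y w,
      hP.2.1 y w]
  | succ k ih =>
    set U := upFinS hCF n {w} with hUdef
    set Us := U.filter (fun w' => ¬ w' = w) with hUsdef
    have hwU : w ∈ U := by
      rw [hUdef, mem_upFinS hCF]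
      exact ⟨hw, fun x hx => by rw [Finset.mem_singleton] at hx; rw [hx]; exact hLe_refl w⟩
    have hwnot : w ∉ Us := by
      rw [hUsdef, Finset.mem_filter]
      intro hcon
      exact hcon.2 rfl
    have hsplit : U = insert w Us := by
      ext w'
      rw [Finset.mem_insert, hUsdef, Finset.mem_filter]
      constructor
      · intro h
        by_cases he : w' = w
        · exact Or.inl he
        · exact Or.inr ⟨h, he⟩
      · rintro (rfl | ⟨h, _⟩)
        · exact hwU
        · exact h
    -- the strict uppers satisfy the conclusion
    have hstrict : ∀ w' ∈ Us, P (cyl y ∩ (fun ξ : Bnd I => subB ξ y) ⁻¹' (Tset n w'))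
        = P (cyl y) * P (Tset n w') := by
      intro w' hw'
      obtain ⟨hw'U, hw'ne⟩ := Finset.mem_filter.mp hw'
      obtain ⟨hh', hle'⟩ := (mem_upFinS hCF).mp hw'U
      have hle : hLe w w' := hle' w (Finset.mem_singleton_self w)
      apply ih w' hh'
      -- strict upper set of w' is strictly smaller
      have hsub : (upFinS hCF n {w'}).filter (fun w'' => ¬ w'' = w') ⊆ Us := by
        intro w'' hw''
        obtain ⟨hw''U, hw''ne⟩ := Finset.mem_filter.mp hw''
        obtain ⟨hh'', hle''⟩ := (mem_upFinS hCF).mp hw''U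
        have hle2 : hLe w' w'' := hle'' w' (Finset.mem_singleton_self w')
        rw [hUsdef, Finset.mem_filter]
        constructor
        · rw [hUdef, mem_upFinS hCF]
          refine ⟨hh'', fun x hx => ?_⟩
          rw [Finset.mem_singleton] at hx
          rw [hx]
          exact hLe_trans hle hle2
        · intro hcon
          rw [hcon] at hle2
          exact hw'ne (hLe_antisymm hle hle2).symm
      have hmem1 : w' ∈ Us := hw'
      have hmem2 : w' ∉ (upFinS hCF n {w'}).filter (fun w'' => ¬ w'' = w') := by
        rw [Finset.mem_filter]
        intro hcon
        exact hcon.2 rfl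
      have hlt : ((upFinS hCF n {w'}).filter (fun w'' => ¬ w'' = w')).card < Us.card :=
        Finset.card_lt_card ⟨hsub, fun hcon => hmem2 (hcon hmem1)⟩
      omega
    -- partition computations
    have hpart := cyl_eq_biUnion_T hsymm hirr hCF w (n := n) hw
    have hP2 : P (cyl w) = ∑ w' ∈ U, P (Tset n w') := by
      rw [hpart]
      apply measure_biUnion_finset
      · intro a _ b _ hab
        exact Tset_disjoint hab
      · intro b _
        exact measurableSet_Tset hCF n b
    have hP1 : P (cyl y) * P (cyl w)
        = ∑ w' ∈ U, P (cyl y ∩ (fun ξ : Bnd I => subB ξ y) ⁻¹' (Tset n w')) := by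
      rw [← hP.2.1 y w,
        ← cyl_inter_preimage hsymm hirr hCF hconc hconcInj hsubEx y w, hpart,
        Set.preimage_iUnion₂, Set.inter_iUnion₂]
      apply measure_biUnion_finset
      · intro a _ b _ hab
        exact ((Tset_disjoint hab).preimage _).mono Set.inter_subset_right
          Set.inter_subset_right
      · intro b _
        exact (measurableSet_cyl y).inter
          ((measurable_g hsymm hirr hCF hconc hconcInj hsubEx y)
            (measurableSet_Tset hCF n b))
    have hsum1 : ∑ w' ∈ U, P (cyl y ∩ (fun ξ : Bnd I => subB ξ y) ⁻¹' (Tset n w'))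
        = P (cyl y ∩ (fun ξ : Bnd I => subB ξ y) ⁻¹' (Tset n w))
          + P (cyl y) * ∑ w' ∈ Us, P (Tset n w') := by
      rw [hsplit, Finset.sum_insert hwnot, Finset.mul_sum]
      congr 1
      exact Finset.sum_congr rfl (fun w' hw' => hstrict w' hw')
    have hsum2 : P (cyl y) * P (cyl w)
        = P (cyl y) * P (Tset n w) + P (cyl y) * ∑ w' ∈ Us, P (Tset n w') := by
      rw [hP2, hsplit, Finset.sum_insert hwnot, mul_add]
    have hfin : (P (cyl y) * ∑ w' ∈ Us, P (Tset n w')) ≠ ⊤ := by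
      apply ne_of_lt
      apply ENNReal.mul_lt_top (measure_lt_top P _)
      exact ENNReal.sum_lt_top.mpr (fun a _ => measure_lt_top P _)
    have hcomb : P (cyl y ∩ (fun ξ : Bnd I => subB ξ y) ⁻¹' (Tset n w))
          + P (cyl y) * ∑ w' ∈ Us, P (Tset n w')
        = P (cyl y) * P (Tset n w) + P (cyl y) * ∑ w' ∈ Us, P (Tset n w') := by
      rw [← hsum1, ← hP1, hsum2]
    rw [add_comm _ (P (cyl y) * ∑ w' ∈ Us, P (Tset n w')),
      add_comm _ (P (cyl y) * ∑ w' ∈ Us, P (Tset n w'))] at hcomb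
    exact (ENNReal.add_right_inj hfin).mp hcomb

lemma SB_T' (y : Heap I) (n : ℕ) (w : Heap I) (hw : height w ≤ n) :
    P (cyl y ∩ (fun ξ : Bnd I => subB ξ y) ⁻¹' (Tset n w))
      = P (cyl y) * P (Tset n w) :=
  SB_T hsymm hirr hCF hconc hconcInj hsubEx P hP y n _ w hw le_rfl

/-- The π-system of finite intersections of cylinders. -/
def PiSys (I : S → S → Prop) : Set (Set (Bnd I)) :=
  {A | ∃ t : Finset (Heap I), t.Nonempty ∧ A = ⋂ x ∈ t, cyl x}

omit hsymm hirr hCF hconc hconcInj hsubEx hP in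
lemma isPiSystem_PiSys : IsPiSystem (PiSys I) := by
  rintro A ⟨t, ht, rfl⟩ B ⟨t', ht', rfl⟩ _
  refine ⟨t ∪ t', Finset.Nonempty.inl ht, ?_⟩
  ext ξ
  simp only [Set.mem_inter_iff, Set.mem_iInter, Finset.mem_union]
  constructor
  · rintro ⟨h1, h2⟩ x hx
    rcases hx with hx | hx
    · exact h1 x hx
    · exact h2 x hx
  · intro h
    exact ⟨fun x hx => h x (Or.inl hx), fun x hx => h x (Or.inr hx)⟩

omit hsymm hirr hCF hconc hconcInj hsubEx hP in
lemma measurableSet_PiSys {A : Set (Bnd I)} (h : A ∈ PiSys I) : MeasurableSet A := by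
  obtain ⟨t, ht, rfl⟩ := h
  have : Countable (Heap I) := countable_heap
  exact MeasurableSet.biInter (Set.to_countable _) (fun x _ => measurableSet_cyl x)

omit hsymm hirr hCF hconc hconcInj hsubEx hP in
lemma Fsa_eq_pi : (Fsa I : MeasurableSpace (Bnd I))
    = MeasurableSpace.generateFrom (PiSys I) := by
  apply le_antisymm
  · apply MeasurableSpace.generateFrom_le
    rintro A ⟨x, rfl⟩
    apply MeasurableSpace.measurableSet_generateFrom
    exact ⟨{x}, Finset.singleton_nonempty x, by rw [Finset.set_biInter_singleton]⟩
  · apply MeasurableSpace.generateFrom_le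
    intro A hA
    exact measurableSet_PiSys hA

lemma SB_Pi (y : Heap I) {A : Set (Bnd I)} (hA : A ∈ PiSys I) :
    P (cyl y ∩ (fun ξ : Bnd I => subB ξ y) ⁻¹' A) = P (cyl y) * P A := by
  obtain ⟨t, ht, rfl⟩ := hA
  set n := t.sup height with hn
  have hle : ∀ x ∈ t, height x ≤ n := fun x hx => Finset.le_sup hx
  have hpart := biInter_cyl_eq_biUnion_T hsymm hirr hCF t hle
  rw [hpart, Set.preimage_iUnion₂, Set.inter_iUnion₂]
  rw [measure_biUnion_finset ?disj ?meas, measure_biUnion_finset ?disj2 ?meas2]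
  case disj =>
    intro a _ b _ hab
    exact ((Tset_disjoint hab).preimage _).mono Set.inter_subset_right
      Set.inter_subset_right
  case meas =>
    intro b _
    exact (measurableSet_cyl y).inter
      ((measurable_g hsymm hirr hCF hconc hconcInj hsubEx y)
        (measurableSet_Tset hCF n b))
  case disj2 =>
    intro a _ b _ hab
    exact Tset_disjoint hab
  case meas2 =>
    intro b _
    exact measurableSet_Tset hCF n b
  rw [Finset.mul_sum]
  apply Finset.sum_congr rfl
  intro w hw
  exact SB_T' hsymm hirr hCF hconc hconcInj hsubEx P hP y n w ((mem_upFinS hCF).mp hw).1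

/-- The strong Bernoulli property: translation invariance on all measurable sets. -/
lemma SB_all (y : Heap I) {A : Set (Bnd I)} (hA : MeasurableSet A) :
    P (cyl y ∩ (fun ξ : Bnd I => subB ξ y) ⁻¹' A) = P (cyl y) * P A := by
  haveI := hP.1
  revert A
  have hind := MeasurableSpace.induction_on_inter
    (m := (inferInstance : MeasurableSpace (Bnd I)))
    (C := fun A _ => P (cyl y ∩ (fun ξ : Bnd I => subB ξ y) ⁻¹' A) = P (cyl y) * P A)
    (s := PiSys I) Fsa_eq_pi isPiSystem_PiSys
  intro A hA
  apply hind
  · simp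
  · intro t ht
    exact SB_Pi hsymm hirr hCF hconc hconcInj hsubEx P hP y ht
  · intro t htm hC
    have h1 : (cyl y ∩ (fun ξ : Bnd I => subB ξ y) ⁻¹' t)
        ∪ (cyl y ∩ (fun ξ : Bnd I => subB ξ y) ⁻¹' tᶜ) = cyl y := by
      rw [← Set.inter_union_distrib_left, Set.preimage_compl, Set.union_compl_self,
        Set.inter_univ]
    have h2 : Disjoint (cyl y ∩ (fun ξ : Bnd I => subB ξ y) ⁻¹' t)
        (cyl y ∩ (fun ξ : Bnd I => subB ξ y) ⁻¹' tᶜ) := by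
      apply Disjoint.mono Set.inter_subset_right Set.inter_subset_right
      rw [Set.preimage_compl]
      exact disjoint_compl_right
    have h3 := measure_union (μ := P) h2
      ((measurableSet_cyl y).inter
        ((measurable_g hsymm hirr hCF hconc hconcInj hsubEx y) htm.compl))
    rw [h1, hC] at h3
    have h4 : P (cyl y) = P (cyl y) * P t + P (cyl y) * P tᶜ := by
      rw [← mul_add]
      rw [measure_add_measure_compl htm]
      rw [measure_univ, mul_one]
    have hfin : (P (cyl y) * P t) ≠ ⊤ :=
      ne_of_lt (ENNReal.mul_lt_top (measure_lt_top P _) (measure_lt_top P _))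
    have h5 : P (cyl y) * P t + P (cyl y) * P tᶜ
        = P (cyl y) * P t + P (cyl y ∩ (fun ξ : Bnd I => subB ξ y) ⁻¹' tᶜ) := by
      rw [← h4, ← h3]
    exact ((ENNReal.add_right_inj hfin).mp h5).symm
  · intro f hdisj hfm hC
    rw [Set.preimage_iUnion, Set.inter_iUnion]
    rw [measure_iUnion ?hd ?hm]
    case hd =>
      intro i j hij
      exact ((hdisj hij).preimage _).mono Set.inter_subset_right Set.inter_subset_right
    case hm =>
      intro i
      exact (measurableSet_cyl y).inter
        ((measurable_g hsymm hirr hCF hconc hconcInj hsubEx y) (hfm i))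
    rw [measure_iUnion hdisj hfm, ← ENNReal.tsum_mul_left]
    exact tsum_congr (fun i => hC i)
  · exact hA

end MeasB


/-! ### Measure preservation -/

section MeasC

variable {I : S → S → Prop} [Fintype S] [DecidableEq S]
variable (hsymm : ∀ a b : S, I a b → I b a) (hirr : ∀ a : S, ¬ I a a)
variable (hCF : ∀ x : Heap I, ∃! c : ℕ → Cl I, CFprop I c x)
variable (hconc : ∀ (x : Heap I) (ξ : Bnd I), ∃ ζ : Bnd I, IsConc x ξ (Sum.inr ζ))
variable (hconcInj : ∀ (x : Heap I) (ζ ζ' : Bnd I), concB x ζ = concB x ζ' → ζ = ζ')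
variable (hsubEx : ∀ (x : Heap I) (ξ : Bnd I), ξ ∈ cyl x → ∃ ζ : Bnd I, concB x ζ = ξ)
variable (P : Measure (Bnd I)) (hP : IsBernoulli P)
variable {V : Bnd I → MB I} (hV : IsAST V)

/-- The set of finite values of `V`. -/
def Rset (V : Bnd I → MB I) : Set (Heap I) := {x | ∃ ξ, V ξ = Sum.inl x}

/-- The domain of the shift `θ_V`. -/
def Dset (V : Bnd I → MB I) : Set (Bnd I) := ⋃ x ∈ Rset V, cyl x

include hV in
lemma mem_Dset_iff (ξ : Bnd I) : ξ ∈ Dset V ↔ ∃ x, V ξ = Sum.inl x := by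
  constructor
  · intro h
    obtain ⟨x, hx, hξ⟩ := Set.mem_iUnion₂.mp h
    obtain ⟨ξ₀, hξ₀⟩ := hx
    exact ⟨x, V_const_on_cyl hV hξ₀ ξ hξ⟩
  · rintro ⟨x, hx⟩
    exact Set.mem_iUnion₂.mpr ⟨x, ⟨ξ, hx⟩, V_mem_cyl hV hx⟩

lemma measurableSet_Dset : MeasurableSet (Dset V) := by
  haveI : Countable (Heap I) := countable_heap
  exact MeasurableSet.biUnion (Set.to_countable _) (fun x _ => measurableSet_cyl x)

include hV in
lemma cyl_disjoint_R {x x' : Heap I} (hx : x ∈ Rset V) (hx' : x' ∈ Rset V)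
    (hne : x ≠ x') : Disjoint (cyl x) (cyl x') := by
  rw [Set.disjoint_left]
  intro ξ h1 h2
  obtain ⟨ξ₀, h₀⟩ := hx
  obtain ⟨ξ₀', h₀'⟩ := hx'
  have e1 := V_const_on_cyl hV h₀ ξ h1
  have e2 := V_const_on_cyl hV h₀' ξ h2
  rw [e1] at e2
  exact hne (Sum.inl.injEq _ _ |>.mp e2)

include hV in
lemma theta_preimage (A : Set (Bnd I)) :
    shiftV V ⁻¹' A = (A ∩ (Dset V)ᶜ)
      ∪ ⋃ x ∈ Rset V, (cyl x ∩ (fun ξ : Bnd I => subB ξ x) ⁻¹' A) := by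
  ext ξ
  by_cases hD : ξ ∈ Dset V
  · obtain ⟨x, hx⟩ := (mem_Dset_iff hV ξ).mp hD
    have hθ : shiftV V ξ = subB ξ x := shiftV_eq_subB hx
    constructor
    · intro h
      right
      exact Set.mem_iUnion₂.mpr ⟨x, ⟨ξ, hx⟩, V_mem_cyl hV hx, by
        show subB ξ x ∈ A
        rw [← hθ]
        exact h⟩
    · intro h
      rcases h with h | h
      · exact absurd hD h.2
      · obtain ⟨x', hx', hmem⟩ := Set.mem_iUnion₂.mp h
        obtain ⟨ξ₀', h₀'⟩ := hx'
        have hVx' : V ξ = Sum.inl x' := V_const_on_cyl hV h₀' ξ hmem.1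
        show shiftV V ξ ∈ A
        rw [shiftV_eq_subB hVx']
        exact hmem.2
  · have hθ : shiftV V ξ = ξ :=
      shiftV_eq_id (fun x hx => hD ((mem_Dset_iff hV ξ).mpr ⟨x, hx⟩))
    constructor
    · intro h
      left
      have h' : shiftV V ξ ∈ A := h
      rw [hθ] at h'
      exact ⟨h', hD⟩
    · intro h
      rcases h with h | h
      · show shiftV V ξ ∈ A
        rw [hθ]
        exact h.1
      · exfalso
        obtain ⟨x', hx', hmem⟩ := Set.mem_iUnion₂.mp h
        exact hD (Set.mem_iUnion₂.mpr ⟨x', hx', hmem.1⟩)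

include hsymm hirr hCF hconc hconcInj hsubEx hV in
lemma measurable_shiftV : Measurable (shiftV V) := by
  haveI : Countable (Heap I) := countable_heap
  apply measurable_generateFrom
  rintro t ⟨u, rfl⟩
  rw [theta_preimage hV]
  exact ((measurableSet_cyl u).inter (measurableSet_Dset (V := V)).compl).union
    (MeasurableSet.biUnion (Set.to_countable _) (fun x _ =>
      (measurableSet_cyl x).inter
        ((measurable_g hsymm hirr hCF hconc hconcInj hsubEx x) (measurableSet_cyl u))))

include hP hV

lemma Dset_compl_null (hfin : ∀ᵐ ξ ∂P, ∃ x : Heap I, V ξ = Sum.inl x) :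
    P (Dset V)ᶜ = 0 := by
  rw [MeasureTheory.ae_iff] at hfin
  have he : (Dset V)ᶜ = {ξ : Bnd I | ¬ ∃ x, V ξ = Sum.inl x} := by
    ext ξ
    simp [mem_Dset_iff hV]
  rw [he]
  exact hfin

lemma P_Dset (hfin : ∀ᵐ ξ ∂P, ∃ x : Heap I, V ξ = Sum.inl x) : P (Dset V) = 1 := by
  haveI := hP.1
  have h := measure_add_measure_compl (μ := P) (measurableSet_Dset (V := V))
  rw [Dset_compl_null P hP hV hfin, add_zero, measure_univ] at h
  exact h

include hsymm hirr hCF hconc hconcInj hsubEx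

lemma P_theta_preimage (hfin : ∀ᵐ ξ ∂P, ∃ x : Heap I, V ξ = Sum.inl x)
    {A : Set (Bnd I)} (hA : MeasurableSet A) : P (shiftV V ⁻¹' A) = P A := by
  haveI := hP.1
  haveI : Countable (Heap I) := countable_heap
  rw [theta_preimage hV]
  have hnull : P (A ∩ (Dset V)ᶜ) = 0 :=
    measure_mono_null Set.inter_subset_right (Dset_compl_null P hP hV hfin)
  have h1 : P ((A ∩ (Dset V)ᶜ)
        ∪ ⋃ x ∈ Rset V, (cyl x ∩ (fun ξ : Bnd I => subB ξ x) ⁻¹' A))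
      = P (⋃ x ∈ Rset V, (cyl x ∩ (fun ξ : Bnd I => subB ξ x) ⁻¹' A)) := by
    apply le_antisymm
    · refine le_trans (measure_union_le _ _) ?_
      rw [hnull, zero_add]
    · exact measure_mono Set.subset_union_right
  rw [h1]
  rw [measure_biUnion (Set.to_countable _) ?pd ?pm]
  case pd =>
    intro x hx x' hx' hne
    exact (cyl_disjoint_R hV hx hx' hne).mono Set.inter_subset_left Set.inter_subset_left
  case pm =>
    intro x _
    exact (measurableSet_cyl x).inter
      ((measurable_g hsymm hirr hCF hconc hconcInj hsubEx x) hA)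
  have h2 : ∀ x : (Rset V), P (cyl (x : Heap I) ∩ (fun ξ : Bnd I => subB ξ (x : Heap I)) ⁻¹' A)
      = P (cyl (x : Heap I)) * P A := fun x =>
    SB_all hsymm hirr hCF hconc hconcInj hsubEx P hP (x : Heap I) hA
  rw [tsum_congr h2, ENNReal.tsum_mul_right]
  have h3 : ∑' (x : (Rset V)), P (cyl (x : Heap I)) = P (Dset V) :=
    (measure_biUnion (Set.to_countable _)
      (fun x hx x' hx' hne => cyl_disjoint_R hV hx hx' hne)
      (fun b _ => measurableSet_cyl b)).symm
  rw [h3, P_Dset P hP hV hfin, one_mul]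

theorem MP_shift (hfin : ∀ᵐ ξ ∂P, ∃ x : Heap I, V ξ = Sum.inl x) :
    MeasurePreserving (shiftV V) P P := by
  haveI := hP.1
  have hmeas := measurable_shiftV hsymm hirr hCF hconc hconcInj hsubEx hV
  refine ⟨hmeas, ?_⟩
  haveI : IsProbabilityMeasure (Measure.map (shiftV V) P) :=
    Measure.isProbabilityMeasure_map hmeas.aemeasurable
  apply MeasureTheory.ext_of_generate_finite (PiSys I) Fsa_eq_pi isPiSystem_PiSys
  · intro A hA
    rw [Measure.map_apply hmeas (measurableSet_PiSys hA)]
    exact P_theta_preimage hsymm hirr hCF hconc hconcInj hsubEx P hP hV hfin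
      (measurableSet_PiSys hA)
  · rw [measure_univ, measure_univ]

end MeasC


/-! ### Ergodicity -/

section MeasD

variable {I : S → S → Prop} [Fintype S] [DecidableEq S]
variable (hsymm : ∀ a b : S, I a b → I b a) (hirr : ∀ a : S, ¬ I a a)
variable (hCF : ∀ x : Heap I, ∃! c : ℕ → Cl I, CFprop I c x)
variable (hconc : ∀ (x : Heap I) (ξ : Bnd I), ∃ ζ : Bnd I, IsConc x ξ (Sum.inr ζ))
variable (hconcInj : ∀ (x : Heap I) (ζ ζ' : Bnd I), concB x ζ = concB x ζ' → ζ = ζ')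
variable (hsubEx : ∀ (x : Heap I) (ξ : Bnd I), ξ ∈ cyl x → ∃ ζ : Bnd I, concB x ζ = ξ)
variable (P : Measure (Bnd I)) (hP : IsBernoulli P)
variable {V : Bnd I → MB I} (hV : IsAST V)

/-- The π-system of cylinders of finite values of the iterated stopping times. -/
def LamInf (V : Bnd I → MB I) : Set (Set (Bnd I)) :=
  {A | ∃ (n : ℕ) (u : Heap I), (∃ ξ, iter V n ξ = Sum.inl u) ∧ A = cyl u}

include hsymm hirr hCF hconc hconcInj hsubEx hV

lemma isPiSystem_LamInf : IsPiSystem (LamInf V) := by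
  rintro A ⟨n, u, ⟨ξ₀, hξ₀⟩, rfl⟩ B ⟨m, u', ⟨ξ₀', hξ₀'⟩, rfl⟩ hne
  obtain ⟨ξ, hξu, hξu'⟩ := hne
  have h1 : iter V n ξ = Sum.inl u :=
    (iter_spec hsymm hirr hCF hconc hconcInj hsubEx hV n ξ₀ u hξ₀).2.1 ξ hξu
  have h2 : iter V m ξ = Sum.inl u' :=
    (iter_spec hsymm hirr hCF hconc hconcInj hsubEx hV m ξ₀' u' hξ₀').2.1 ξ hξu'
  rcases le_total n m with h | h
  · obtain ⟨x, hx, hle⟩ := iter_le (V := V) h h2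
    rw [h1] at hx
    have hux : u = x := Sum.inl.injEq _ _ |>.mp hx
    subst hux
    have hsub : cyl u' ⊆ cyl u := cyl_mono hsymm hirr hCF hle
    rw [Set.inter_eq_right.mpr hsub]
    exact ⟨m, u', ⟨ξ₀', hξ₀'⟩, rfl⟩
  · obtain ⟨x, hx, hle⟩ := iter_le (V := V) h h1
    rw [h2] at hx
    have hux : u' = x := Sum.inl.injEq _ _ |>.mp hx
    subst hux
    have hsub : cyl u ⊆ cyl u' := cyl_mono hsymm hirr hCF hle
    rw [Set.inter_eq_left.mpr hsub]
    exact ⟨n, u, ⟨ξ₀, hξ₀⟩, rfl⟩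

omit hsymm hirr hCF hconc hconcInj hsubEx hV in
lemma LamInf_le : MeasurableSpace.generateFrom (LamInf V) ≤ (Fsa I) := by
  apply MeasurableSpace.generateFrom_le
  rintro A ⟨n, u, hu, rfl⟩
  exact measurableSet_cyl u

lemma invariant_inter_cyl {s : Set (Bnd I)} (hsinv : shiftV V ⁻¹' s = s) {n : ℕ}
    {u : Heap I} {ξ₀ : Bnd I} (hu : iter V n ξ₀ = Sum.inl u) :
    s ∩ cyl u = cyl u ∩ (fun ξ : Bnd I => subB ξ u) ⁻¹' s := by
  have hit := iter_spec hsymm hirr hCF hconc hconcInj hsubEx hV n ξ₀ u hu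
  have hinv_n : (shiftV V)^[n] ⁻¹' s = s := Function.IsFixedPt.preimage_iterate hsinv n
  ext ξ
  constructor
  · rintro ⟨hs, hc⟩
    refine ⟨hc, ?_⟩
    have h3 : iter V n ξ = Sum.inl u := hit.2.1 ξ hc
    have hθ : (shiftV V)^[n] ξ = subB ξ u :=
      (iter_spec hsymm hirr hCF hconc hconcInj hsubEx hV n ξ u h3).2.2
    show subB ξ u ∈ s
    rw [← hθ]
    have hs' : ξ ∈ (shiftV V)^[n] ⁻¹' s := by rw [hinv_n]; exact hs
    exact hs'
  · rintro ⟨hc, hsub⟩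
    refine ⟨?_, hc⟩
    have h3 : iter V n ξ = Sum.inl u := hit.2.1 ξ hc
    have hθ : (shiftV V)^[n] ξ = subB ξ u :=
      (iter_spec hsymm hirr hCF hconc hconcInj hsubEx hV n ξ u h3).2.2
    rw [← hinv_n]
    show (shiftV V)^[n] ξ ∈ s
    rw [hθ]
    exact hsub

include hP in
lemma invariant_indep {s : Set (Bnd I)} (hs : MeasurableSet s)
    (hsinv : shiftV V ⁻¹' s = s) :
    ∀ B : Set (Bnd I), MeasurableSet[MeasurableSpace.generateFrom (LamInf V)] B →
      P (s ∩ B) = P s * P B := by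
  haveI := hP.1
  have hind := MeasurableSpace.induction_on_inter
    (m := MeasurableSpace.generateFrom (LamInf V))
    (C := fun B _ => P (s ∩ B) = P s * P B)
    (s := LamInf V) rfl (isPiSystem_LamInf hsymm hirr hCF hconc hconcInj hsubEx hV)
  intro B hB
  apply hind
  · simp
  · rintro B ⟨n, u, ⟨ξ₀, hξ₀⟩, rfl⟩
    rw [invariant_inter_cyl hsymm hirr hCF hconc hconcInj hsubEx hV hsinv hξ₀,
      SB_all hsymm hirr hCF hconc hconcInj hsubEx P hP u hs, mul_comm]
  · intro t htm hC
    have htm' : MeasurableSet t := LamInf_le (V := V) t htm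
    have h1 : (s ∩ t) ∪ (s ∩ tᶜ) = s := by
      rw [← Set.inter_union_distrib_left, Set.union_compl_self, Set.inter_univ]
    have h2 : Disjoint (s ∩ t) (s ∩ tᶜ) := by
      apply Disjoint.mono Set.inter_subset_right Set.inter_subset_right
      exact disjoint_compl_right
    have h3 := measure_union (μ := P) h2 (hs.inter htm'.compl)
    rw [h1, hC] at h3
    have h4 : P s = P s * P t + P s * P tᶜ := by
      rw [← mul_add, measure_add_measure_compl htm', measure_univ, mul_one]
    have hfin : (P s * P t) ≠ ⊤ :=
      ne_of_lt (ENNReal.mul_lt_top (measure_lt_top P _) (measure_lt_top P _))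
    have h5 : P s * P t + P s * P tᶜ = P s * P t + P (s ∩ tᶜ) := by
      rw [← h4, ← h3]
    exact ((ENNReal.add_right_inj hfin).mp h5).symm
  · intro f hdisj hfm hC
    have hfm' : ∀ i, MeasurableSet (f i) := fun i => LamInf_le (V := V) _ (hfm i)
    rw [Set.inter_iUnion]
    rw [measure_iUnion ?hd ?hm]
    case hd =>
      intro i j hij
      exact (hdisj hij).mono Set.inter_subset_right Set.inter_subset_right
    case hm =>
      intro i
      exact hs.inter (hfm' i)
    rw [measure_iUnion hdisj hfm', ← ENNReal.tsum_mul_left]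
    exact tsum_congr (fun i => hC i)
  · exact hB

include hP in
lemma iter_finite_null (hfin : ∀ᵐ ξ ∂P, ∃ x : Heap I, V ξ = Sum.inl x) (n : ℕ) :
    P {ξ : Bnd I | ¬ ∃ u, iter V n ξ = Sum.inl u} = 0 := by
  induction n with
  | zero =>
    have he : {ξ : Bnd I | ¬ ∃ u, iter V 0 ξ = Sum.inl u} = ∅ := by
      ext ξ
      simp only [Set.mem_setOf, Set.mem_empty_iff_false, iff_false, not_not]
      exact ⟨1, rfl⟩
    rw [he]
    exact measure_empty
  | succ n ih =>
    have hsub : {ξ : Bnd I | ¬ ∃ u, iter V (n+1) ξ = Sum.inl u}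
        ⊆ {ξ : Bnd I | ¬ ∃ u, iter V n ξ = Sum.inl u}
          ∪ (shiftV V)^[n] ⁻¹' (Dset V)ᶜ := by
      intro ξ hξ
      by_cases h1 : ∃ u, iter V n ξ = Sum.inl u
      · obtain ⟨x, hx⟩ := h1
        right
        have hit := iter_spec hsymm hirr hCF hconc hconcInj hsubEx hV n ξ x hx
        show (shiftV V)^[n] ξ ∈ (Dset V)ᶜ
        rw [hit.2.2]
        intro hD
        obtain ⟨y, hy⟩ := (mem_Dset_iff hV _).mp hD
        exact hξ ⟨x * y, by simp only [iter, hx, hy]; rfl⟩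
      · left
        exact h1
    apply measure_mono_null hsub
    apply measure_union_null ih
    have hMP := (MP_shift hsymm hirr hCF hconc hconcInj hsubEx P hP hV hfin).iterate n
    rw [hMP.measure_preimage (measurableSet_Dset (V := V)).compl.nullMeasurableSet]
    exact Dset_compl_null P hP hV hfin

/-- The union of iterate-cylinders above `x`. -/
def Bx (V : Bnd I → MB I) (x : Heap I) : Set (Bnd I) :=
  ⋃ (n : ℕ), ⋃ (u ∈ {u : Heap I | (∃ ξ, iter V n ξ = Sum.inl u) ∧ hLe x u}), cyl u

omit hsymm hirr hCF hconc hconcInj hsubEx hV in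
lemma Bx_measG (x : Heap I) :
    MeasurableSet[MeasurableSpace.generateFrom (LamInf V)] (Bx V x) := by
  haveI : Countable (Heap I) := countable_heap
  have key : ∀ (m : MeasurableSpace (Bnd I)),
      (∀ (n : ℕ) (u : Heap I), (∃ ξ, iter V n ξ = Sum.inl u) → MeasurableSet[m] (cyl u)) →
      MeasurableSet[m] (Bx V x) := by
    intro m hm
    letI := m
    apply MeasurableSet.iUnion
    intro n
    apply MeasurableSet.biUnion (Set.to_countable _)
    intro u hu
    exact hm n u hu.1
  exact key _ (fun n u hu => MeasurableSpace.measurableSet_generateFrom ⟨n, u, hu, rfl⟩)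

lemma Bx_subset (x : Heap I) : Bx V x ⊆ cyl x := by
  intro ξ hξ
  obtain ⟨n, hn⟩ := Set.mem_iUnion.mp hξ
  obtain ⟨u, hu, hmem⟩ := Set.mem_iUnion₂.mp hn
  exact cyl_mono hsymm hirr hCF hu.2 hmem

include hP in
lemma cyl_diff_Bx_null (hexh : Exhaustive P V) (x : Heap I) :
    P (cyl x \ Bx V x) = 0 := by
  have hfin := hexh.1
  have hgood : P ({ξ : Bnd I | ¬ ((∀ n, ∃ u, iter V n ξ = Sum.inl u) ∧
      ((∀ n : ℕ, mLe (iter V n ξ) (.inr ξ)) ∧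
        ∀ ζ : MB I, (∀ n : ℕ, mLe (iter V n ξ) ζ) → mLe (.inr ξ) ζ))}) = 0 := by
    have h1 : ∀ᵐ ξ ∂P, ∀ n, ∃ u, iter V n ξ = Sum.inl u := by
      rw [MeasureTheory.ae_all_iff]
      intro n
      have := iter_finite_null hsymm hirr hCF hconc hconcInj hsubEx P hP hV hfin n
      rw [MeasureTheory.ae_iff]
      exact this
    have h2 := hexh.2
    have h3 := h1.and h2
    rw [MeasureTheory.ae_iff] at h3
    exact h3
  apply measure_mono_null ?_ hgood
  intro ξ hξ
  obtain ⟨hcyl, hnB⟩ := hξ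
  intro hgoodξ
  obtain ⟨hall, hub, hlub⟩ := hgoodξ
  apply hnB
  -- extract the chain of iterate values
  choose u hu using hall
  have humono : ∀ m, hLe (u m) (u (m+1)) := by
    intro m
    rcases h2 : V (subB ξ (u m)) with y | ρ
    · have : iter V (m+1) ξ = Sum.inl (u m * y) := by
        simp only [iter, hu m, h2]; rfl
      rw [hu (m+1)] at this
      have he : u (m+1) = u m * y := Sum.inl.injEq _ _ |>.mp this
      rw [he]
      exact hLe_mul_right _ _
    · exfalso
      have : iter V (m+1) ξ = Sum.inr (concB (u m) ρ) := by
        simp only [iter, hu m, h2]; rfl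
      rw [hu (m+1)] at this
      exact Sum.inl_ne_inr this
  have hubm : ∀ m, mLe (Sum.inl (u m)) (Sum.inr ξ) := by
    intro m
    exact (iter_spec hsymm hirr hCF hconc hconcInj hsubEx hV m ξ (u m) (hu m)).1
  have hlubm : ∀ ζ : MB I, (∀ m, mLe (Sum.inl (u m)) ζ) → mLe (Sum.inr ξ) ζ := by
    intro ζ hζ
    apply hlub
    intro n
    rw [hu n]
    exact hζ n
  obtain ⟨m, hm⟩ := lub_compact hsymm hirr hCF humono hubm hlubm (height x)
  have hxle : hLe x (u m) :=
    hLe_trans (hLe_pp_of_mem_cyl hCF hcyl (le_refl (height x))) hm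
  apply Set.mem_iUnion.mpr
  refine ⟨m, Set.mem_iUnion₂.mpr ⟨u m, ⟨⟨ξ, hu m⟩, hxle⟩, ?_⟩⟩
  exact (iter_spec hsymm hirr hCF hconc hconcInj hsubEx hV m ξ (u m) (hu m)).1

include hP in
/-- Approximation of measurable sets by `𝔊`-sets modulo null sets. -/
lemma approx_G (hexh : Exhaustive P V) {A : Set (Bnd I)} (hA : MeasurableSet A) :
    ∃ B, MeasurableSet[MeasurableSpace.generateFrom (LamInf V)] B ∧
      P (A \ B) = 0 ∧ P (B \ A) = 0 := by
  let m' : MeasurableSpace (Bnd I) :=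
    { MeasurableSet' := fun A => MeasurableSet A ∧
        ∃ B, MeasurableSet[MeasurableSpace.generateFrom (LamInf V)] B ∧
          P (A \ B) = 0 ∧ P (B \ A) = 0
      measurableSet_empty := ⟨MeasurableSet.empty, ∅,
        @MeasurableSet.empty _ (MeasurableSpace.generateFrom (LamInf V)), by simp, by simp⟩
      measurableSet_compl := by
        rintro A ⟨hA, B, hB, h1, h2⟩
        refine ⟨hA.compl, Bᶜ, hB.compl, ?_, ?_⟩
        · have he : Aᶜ \ Bᶜ = B \ A := by
            ext ξ; simp [Set.mem_diff]; tauto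
          rw [he]; exact h2
        · have he : Bᶜ \ Aᶜ = A \ B := by
            ext ξ; simp [Set.mem_diff]; tauto
          rw [he]; exact h1
      measurableSet_iUnion := by
        intro f hf
        choose hm B hB h1 h2 using hf
        refine ⟨MeasurableSet.iUnion hm, ⋃ i, B i, MeasurableSet.iUnion hB, ?_, ?_⟩
        · apply measure_mono_null (t := ⋃ i, (f i \ B i))
          · intro ξ hξ
            obtain ⟨hmem, hnB⟩ := hξ
            obtain ⟨i, hi⟩ := Set.mem_iUnion.mp hmem
            exact Set.mem_iUnion.mpr
              ⟨i, hi, fun hBi => hnB (Set.mem_iUnion.mpr ⟨i, hBi⟩)⟩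
          · exact measure_iUnion_null h1
        · apply measure_mono_null (t := ⋃ i, (B i \ f i))
          · intro ξ hξ
            obtain ⟨hmem, hnB⟩ := hξ
            obtain ⟨i, hi⟩ := Set.mem_iUnion.mp hmem
            exact Set.mem_iUnion.mpr
              ⟨i, hi, fun hBi => hnB (Set.mem_iUnion.mpr ⟨i, hBi⟩)⟩
          · exact measure_iUnion_null h2 }
  have hle : (Fsa I : MeasurableSpace (Bnd I)) ≤ m' := by
    apply MeasurableSpace.generateFrom_le
    rintro A' ⟨x, rfl⟩
    refine ⟨measurableSet_cyl x, Bx V x, Bx_measG x, ?_, ?_⟩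
    · exact cyl_diff_Bx_null hsymm hirr hCF hconc hconcInj hsubEx P hP hV hexh x
    · have he : Bx V x \ cyl x = ∅ := by
        rw [Set.diff_eq_empty]
        exact Bx_subset hsymm hirr hCF hconc hconcInj hsubEx hV x
      rw [he]
      exact measure_empty
  exact (hle A hA).2

end MeasD

theorem shift_measurePreserving_and_ergodic
    {S : Type} [Fintype S] [DecidableEq S] (I : S → S → Prop)
    (hsymm : ∀ a b : S, I a b → I b a)
    (hirr : ∀ a : S, ¬ I a a)
    (hconn : ∀ a b : S, Relation.ReflTransGen (fun x y : S => x ≠ y ∧ ¬ I x y) a b)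
    (hcard : 1 < Fintype.card S)
    (hCF : ∀ x : Heap I, ∃! c : ℕ → Cl I, CFprop I c x)
    (hconc : ∀ (x : Heap I) (ξ : Bnd I), ∃ ζ : Bnd I, IsConc x ξ (Sum.inr ζ))
    (hconcInj : ∀ (x : Heap I) (ζ ζ' : Bnd I), concB x ζ = concB x ζ' → ζ = ζ')
    (hsubEx : ∀ (x : Heap I) (ξ : Bnd I), ξ ∈ cyl x → ∃ ζ : Bnd I, concB x ζ = ξ)
    (P : Measure (Bnd I)) (hP : IsBernoulli P)
    (V : Bnd I → MB I) (hV : IsAST V) (hexh : Exhaustive P V) :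
    MeasurePreserving (shiftV V) P P ∧ Ergodic (shiftV V) P := by
  classical
  haveI := hP.1
  have hfin := hexh.1
  have hMP := MP_shift hsymm hirr hCF hconc hconcInj hsubEx P hP hV hfin
  refine ⟨hMP, hMP, ?_⟩
  constructor
  intro s hs hsinv
  obtain ⟨B, hBG, h1, h2⟩ :=
    approx_G hsymm hirr hCF hconc hconcInj hsubEx P hP hV hexh hs
  have hind := invariant_indep hsymm hirr hCF hconc hconcInj hsubEx P hP hV hs hsinv B hBG
  have e1 : P (s ∩ B) = P s := by
    apply le_antisymm (measure_mono Set.inter_subset_left)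
    have h3 : P s ≤ P (s ∩ B) + P (s \ B) := by
      calc P s = P ((s ∩ B) ∪ (s \ B)) := by rw [Set.inter_union_diff]
        _ ≤ P (s ∩ B) + P (s \ B) := measure_union_le _ _
    rwa [h1, add_zero] at h3
  have e2 : P B ≤ P s := by
    calc P B = P ((B ∩ s) ∪ (B \ s)) := by rw [Set.inter_union_diff]
      _ ≤ P (B ∩ s) + P (B \ s) := measure_union_le _ _
      _ = P (B ∩ s) := by rw [h2, add_zero]
      _ ≤ P s := measure_mono Set.inter_subset_right
  have e3 : P s ≤ P B := by
    calc P s = P (s ∩ B) := e1.symm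
      _ ≤ P B := measure_mono Set.inter_subset_right
  have e4 : P B = P s := le_antisymm e2 e3
  have key : P s = P s * P s := by
    calc P s = P (s ∩ B) := e1.symm
      _ = P s * P B := hind
      _ = P s * P s := by rw [e4]
  have hzero_or_one : P s = 0 ∨ P s = 1 := by
    by_cases h0 : P s = 0
    · exact Or.inl h0
    · right
      have hne : P s ≠ ⊤ := measure_ne_top P s
      have h5 : P s * 1 = P s * P s := by
        rw [mul_one]
        exact key
      exact ((ENNReal.mul_right_inj h0 hne).mp h5).symm
  rw [Filter.eventuallyConst_set']
  rcases hzero_or_one with h | h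
  · left
    exact ae_eq_empty.mpr h
  · right
    apply ae_eq_univ.mpr
    rw [prob_compl_eq_one_sub hs, h, tsub_self]

end HeapPaper
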